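/- arXiv:2503.06210 — 5 statements merged into one kernel-verified Lean document; each statement's English description precedes it below -/
import Mathlib

section
/- For all real x ≥ 1 and all positive integers q, the sum of 1/n over integers 1 ≤ n ≤ x with gcd(n,q)=1 equals (φ(q)/q)·(log x + Σ_{p | q} (log p)/(p−1) + γ) + O(τ(q)/x), where the implied constant is absolute (independent of q and x). -/
open Finset Real ArithmeticFunction

-- harmonic sum as Icc sum
lemma harm_eq (M : ℕ) : ∑ m ∈ Finset.Icc 1 M, (1:ℝ)/m = (harmonic M : ℝ) := by
  rw [harmonic_eq_sum_Icc]
  push_cast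
  simp [one_div]

-- harmonic asymptotic bound
lemma harm_bound {y : ℝ} (hy : 1 ≤ y) :
    |(harmonic ⌊y⌋₊ : ℝ) - (Real.log y + Real.eulerMascheroniConstant)| ≤ 2 / y := by
  set M := ⌊y⌋₊ with hMdef
  have hM1 : 1 ≤ M := Nat.le_floor (by exact_mod_cast hy)
  have hMR : (1:ℝ) ≤ M := by exact_mod_cast hM1
  have hMy : (M:ℝ) ≤ y := Nat.floor_le (by linarith)
  have hyM : y < M + 1 := Nat.lt_floor_add_one y
  have h1 : (harmonic M : ℝ) - Real.log (M+1) < Real.eulerMascheroniConstant := by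
    have := Real.eulerMascheroniSeq_lt_eulerMascheroniConstant M
    simpa [Real.eulerMascheroniSeq] using this
  have h2 : Real.eulerMascheroniConstant < (harmonic M : ℝ) - Real.log M := by
    have := Real.eulerMascheroniConstant_lt_eulerMascheroniSeq' M
    rw [Real.eulerMascheroniSeq'] at this
    rw [if_neg (by omega)] at this; exact this
  have hlog1 : Real.log M ≤ Real.log y := Real.log_le_log (by linarith) hMy
  have hlog2 : Real.log y ≤ Real.log (M+1) := Real.log_le_log (by linarith) (by linarith)
  have hgap : Real.log (M+1) - Real.log M ≤ 1 / M := by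
    rw [← Real.log_div (by positivity) (by positivity)]
    have := Real.log_le_sub_one_of_pos (x := ((M:ℝ)+1)/M) (by positivity)
    have h : ((M:ℝ)+1)/M - 1 = 1/M := by field_simp; ring
    linarith [this, h.le]
  have h1M : 1 / (M:ℝ) ≤ 2 / y := by
    rw [div_le_div_iff₀ (by linarith) (by linarith)]
    nlinarith
  rw [abs_le]
  constructor <;> nlinarith

lemma sum_divisors_prime_mul {a r : ℕ} (ha : a.Prime) (h : ¬ a ∣ r) (hr : r ≠ 0)
    (F : ℕ → ℝ) :
    ∑ d ∈ (a * r).divisors, F d = ∑ d ∈ r.divisors, F d + ∑ d ∈ r.divisors, F (a * d) := by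
  have ha0 : a ≠ 0 := ha.ne_zero
  have hset : (a * r).divisors = r.divisors ∪ r.divisors.image (a * ·) := by
    ext d
    simp only [Nat.mem_divisors, Finset.mem_union, Finset.mem_image, mul_ne_zero_iff]
    constructor
    · rintro ⟨hd, -⟩
      by_cases had : a ∣ d
      · obtain ⟨e, rfl⟩ := had
        exact Or.inr ⟨e, ⟨(mul_dvd_mul_iff_left ha0).mp hd, hr⟩, rfl⟩
      · exact Or.inl ⟨(Nat.Coprime.dvd_of_dvd_mul_left
          (Nat.Coprime.symm ((Nat.Prime.coprime_iff_not_dvd ha).mpr had)) hd), hr⟩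
    · rintro (⟨hd, -⟩ | ⟨e, ⟨he, -⟩, rfl⟩)
      · exact ⟨hd.mul_left a, ha0, hr⟩
      · exact ⟨mul_dvd_mul_left a he, ha0, hr⟩
  have hdisj : Disjoint r.divisors (r.divisors.image (a * ·)) := by
    rw [Finset.disjoint_left]
    rintro d hd hd'
    obtain ⟨e, he, rfl⟩ := Finset.mem_image.mp hd'
    exact h ((Dvd.intro e rfl).trans (Nat.dvd_of_mem_divisors hd))
  rw [hset, Finset.sum_union hdisj, Finset.sum_image (fun x _ y _ hxy =>
    mul_left_cancel₀ ha0 hxy)]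

lemma moebius_prod_identities : ∀ (s : Finset ℕ), (∀ p ∈ s, p.Prime) →
    ((∑ d ∈ (∏ p ∈ s, p).divisors, (moebius d : ℝ) / d = ∏ p ∈ s, (1 - 1/(p:ℝ))) ∧
    (∑ d ∈ (∏ p ∈ s, p).divisors, (moebius d : ℝ) * Real.log d / d
      = -(∏ p ∈ s, (1 - 1/(p:ℝ))) * ∑ p ∈ s, Real.log p / ((p:ℝ) - 1))) := by
  intro s
  induction s using Finset.induction with
  | empty => exact fun _ => ⟨by simp, by simp⟩
  | @insert a s has ih =>
    intro hs
    have hap : a.Prime := hs a (Finset.mem_insert_self a s)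
    have hs' : ∀ p ∈ s, p.Prime := fun p hp => hs p (Finset.mem_insert_of_mem hp)
    obtain ⟨ih1, ih2⟩ := ih hs'
    have hr0 : (∏ p ∈ s, p) ≠ 0 :=
      Finset.prod_ne_zero_iff.mpr fun p hp => (hs' p hp).ne_zero
    have hadvd : ¬ a ∣ ∏ p ∈ s, p := by
      intro hdvd
      have : a ∈ (∏ p ∈ s, p).primeFactors :=
        Nat.mem_primeFactors.mpr ⟨hap, hdvd, hr0⟩
      rw [Nat.primeFactors_prod hs'] at this
      exact has this
    have haR : (2:ℝ) ≤ a := by exact_mod_cast hap.two_le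
    have ha0 : (a:ℝ) ≠ 0 := by positivity
    have ha1 : (a:ℝ) - 1 ≠ 0 := by intro hc; nlinarith
    -- μ(a*d) = -μ d for d ∣ ∏ s
    have hmu : ∀ d ∈ (∏ p ∈ s, p).divisors, (moebius (a * d) : ℝ) = -(moebius d : ℝ) := by
      intro d hd
      have hdr := Nat.dvd_of_mem_divisors hd
      have hcop : Nat.Coprime a d :=
        (Nat.Prime.coprime_iff_not_dvd hap).mpr (fun hc => hadvd (hc.trans hdr))
      have := isMultiplicative_moebius.map_mul_of_coprime hcop
      rw [this, moebius_apply_prime hap]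
      push_cast
      ring
    rw [Finset.prod_insert has, Finset.sum_insert has,
      sum_divisors_prime_mul hap hadvd hr0 (fun d => (moebius d : ℝ) / d),
      sum_divisors_prime_mul hap hadvd hr0 (fun d => (moebius d : ℝ) * Real.log d / d)]
    have e1 : ∑ d ∈ (∏ p ∈ s, p).divisors, (moebius (a * d) : ℝ) / (a * d)
        = (-(1/(a:ℝ))) * ∑ d ∈ (∏ p ∈ s, p).divisors, (moebius d : ℝ) / d := by
      rw [Finset.mul_sum]
      apply Finset.sum_congr rfl
      intro d hd
      have hd0 : (d:ℝ) ≠ 0 := Nat.cast_ne_zero.mpr (Nat.pos_of_mem_divisors hd).ne'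
      rw [hmu d hd]
      field_simp
    have e2 : ∑ d ∈ (∏ p ∈ s, p).divisors, (moebius (a * d) : ℝ) * Real.log (↑(a * d)) / (↑(a * d))
        = (-(Real.log a/(a:ℝ))) * (∑ d ∈ (∏ p ∈ s, p).divisors, (moebius d : ℝ) / d)
          + (-(1/(a:ℝ))) * ∑ d ∈ (∏ p ∈ s, p).divisors, (moebius d : ℝ) * Real.log d / d := by
      rw [Finset.mul_sum, Finset.mul_sum, ← Finset.sum_add_distrib]
      apply Finset.sum_congr rfl
      intro d hd
      have hd0 : (d:ℝ) ≠ 0 := Nat.cast_ne_zero.mpr (Nat.pos_of_mem_divisors hd).ne'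
      rw [hmu d hd]
      push_cast
      rw [Real.log_mul ha0 hd0]
      field_simp
      ring
    constructor
    · push_cast at e1 ⊢
      rw [e1, ih1, Finset.prod_insert has]
      push_cast
      ring
    · push_cast at e2 ⊢
      rw [e2, ih1, ih2, Finset.prod_insert has]
      push_cast
      field_simp
      ring

lemma squarefree_prod_primes : ∀ (s : Finset ℕ), (∀ p ∈ s, p.Prime) →
    Squarefree (∏ p ∈ s, p) := by
  intro s
  induction s using Finset.induction with
  | empty => simpa using squarefree_one
  | @insert a s has ih =>
    intro hs
    have hap : a.Prime := hs a (Finset.mem_insert_self a s)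
    have hs' : ∀ p ∈ s, p.Prime := fun p hp => hs p (Finset.mem_insert_of_mem hp)
    have hr0 : (∏ p ∈ s, p) ≠ 0 :=
      Finset.prod_ne_zero_iff.mpr fun p hp => (hs' p hp).ne_zero
    have hadvd : ¬ a ∣ ∏ p ∈ s, p := by
      intro hdvd
      have : a ∈ (∏ p ∈ s, p).primeFactors :=
        Nat.mem_primeFactors.mpr ⟨hap, hdvd, hr0⟩
      rw [Nat.primeFactors_prod hs'] at this
      exact has this
    have hcop : Nat.Coprime a (∏ p ∈ s, p) :=
      (Nat.Prime.coprime_iff_not_dvd hap).mpr hadvd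
    rw [Finset.prod_insert has, Nat.squarefree_mul hcop]
    exact ⟨hap.squarefree, ih hs'⟩

lemma sum_moebius_radical {q : ℕ} (hq : q ≠ 0) (f : ℕ → ℝ) :
    ∑ d ∈ q.divisors, (moebius d : ℝ) * f d
      = ∑ d ∈ (∏ p ∈ q.primeFactors, p).divisors, (moebius d : ℝ) * f d := by
  have hfilter : q.divisors.filter Squarefree = (∏ p ∈ q.primeFactors, p).divisors := by
    ext d
    simp only [Finset.mem_filter, Nat.mem_divisors]
    constructor
    · rintro ⟨⟨hdq, -⟩, hsf⟩
      refine ⟨?_, Finset.prod_ne_zero_iff.mpr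
        fun p hp => (Nat.prime_of_mem_primeFactors hp).ne_zero⟩
      have h1 : d.primeFactors ⊆ q.primeFactors := Nat.primeFactors_mono hdq hq
      calc d = ∏ p ∈ d.primeFactors, p := (Nat.prod_primeFactors_of_squarefree hsf).symm
        _ ∣ ∏ p ∈ q.primeFactors, p := Finset.prod_dvd_prod_of_subset _ _ _ h1
    · rintro ⟨hdr, -⟩
      have hsf := (squarefree_prod_primes q.primeFactors
        (fun p hp => Nat.prime_of_mem_primeFactors hp)).squarefree_of_dvd hdr
      exact ⟨⟨hdr.trans (Nat.prod_primeFactors_dvd q), hq⟩, hsf⟩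
  rw [← hfilter, ← Finset.sum_filter_add_sum_filter_not q.divisors Squarefree
    (fun d => (moebius d : ℝ) * f d)]
  have : ∑ d ∈ q.divisors.filter (fun d => ¬ Squarefree d), (moebius d : ℝ) * f d = 0 := by
    apply Finset.sum_eq_zero
    intro d hd
    rw [moebius_eq_zero_of_not_squarefree (Finset.mem_filter.mp hd).2]
    simp
  rw [this, add_zero]

lemma totient_div_eq_prod {q : ℕ} (hq : q ≠ 0) :
    (Nat.totient q : ℝ) / q = ∏ p ∈ q.primeFactors, (1 - 1/(p:ℝ)) := by
  have hQ := Nat.totient_eq_mul_prod_factors q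
  have hR : (Nat.totient q : ℝ) = q * ∏ p ∈ q.primeFactors, (1 - (p:ℝ)⁻¹) := by
    have := congrArg (fun r : ℚ => (r : ℝ)) hQ
    push_cast at this
    exact this
  have hq0 : (q:ℝ) ≠ 0 := Nat.cast_ne_zero.mpr hq
  rw [hR, mul_comm, mul_div_assoc, div_self hq0, mul_one]
  exact Finset.prod_congr rfl fun p _ => by rw [one_div]

lemma identity1 {q : ℕ} (hq : q ≠ 0) :
    ∑ d ∈ q.divisors, (moebius d : ℝ) / d = (Nat.totient q : ℝ) / q := by
  have h := sum_moebius_radical hq (fun d => ((d:ℝ))⁻¹)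
  simp_rw [← div_eq_mul_inv] at h
  rw [h, (moebius_prod_identities q.primeFactors
    (fun p hp => Nat.prime_of_mem_primeFactors hp)).1, totient_div_eq_prod hq]

lemma identity2 {q : ℕ} (hq : q ≠ 0) :
    ∑ d ∈ q.divisors, (moebius d : ℝ) * Real.log d / d
      = -((Nat.totient q : ℝ) / q) * ∑ p ∈ q.primeFactors, Real.log p / ((p:ℝ) - 1) := by
  have h := sum_moebius_radical hq (fun d => Real.log d / d)
  simp_rw [← mul_div_assoc] at h
  rw [h, (moebius_prod_identities q.primeFactors
    (fun p hp => Nat.prime_of_mem_primeFactors hp)).2, totient_div_eq_prod hq]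

lemma moebius_indicator (k : ℕ) :
    ((∑ d ∈ k.divisors, moebius d : ℤ) : ℝ) = if k = 1 then 1 else 0 := by
  have h := congrArg (fun f : ArithmeticFunction ℤ => f k) moebius_mul_coe_zeta
  simp only [coe_mul_zeta_apply, one_apply] at h
  rw [h]
  split_ifs <;> simp

lemma mobius_rearrange {q : ℕ} (hq : 0 < q) (N : ℕ) :
    ∑ n ∈ (Finset.Icc 1 N).filter (fun n => Nat.gcd n q = 1), (1:ℝ)/n
      = ∑ d ∈ q.divisors, (moebius d : ℝ) * ∑ m ∈ Finset.Icc 1 (N / d), (1:ℝ)/(d * m) := by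
  have hq0 : q ≠ 0 := hq.ne'
  rw [Finset.sum_filter]
  have step1 : ∀ n ∈ Finset.Icc 1 N,
      (if Nat.gcd n q = 1 then (1:ℝ)/n else 0)
        = ∑ d ∈ q.divisors.filter (· ∣ n), (moebius d : ℝ) * (1/n) := by
    intro n hn
    have hgcd0 : Nat.gcd n q ≠ 0 := Nat.gcd_ne_zero_right hq0
    have hdiveq : (Nat.gcd n q).divisors = q.divisors.filter (· ∣ n) := by
      ext d
      simp only [Nat.mem_divisors, Finset.mem_filter]
      constructor
      · rintro ⟨hd, -⟩
        exact ⟨⟨(Nat.dvd_gcd_iff.mp hd).2, hq0⟩, (Nat.dvd_gcd_iff.mp hd).1⟩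
      · rintro ⟨⟨hdq, -⟩, hdn⟩
        exact ⟨Nat.dvd_gcd hdn hdq, hgcd0⟩
    rw [← Finset.sum_mul, ← hdiveq]
    have hcast : (∑ d ∈ (Nat.gcd n q).divisors, (moebius d : ℝ))
        = if Nat.gcd n q = 1 then 1 else 0 := by
      rw [← moebius_indicator (Nat.gcd n q)]
      push_cast
      rfl
    rw [hcast]
    split_ifs <;> simp
  rw [Finset.sum_congr rfl step1, Finset.sum_comm' (s := Finset.Icc 1 N)
    (t := fun n => q.divisors.filter (· ∣ n)) (t' := q.divisors)
    (s' := fun d => (Finset.Icc 1 N).filter (d ∣ ·)) (by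
      intro n d
      simp only [Finset.mem_filter]
      tauto)]
  apply Finset.sum_congr rfl
  intro d hd
  have hd1 : 1 ≤ d := (Nat.pos_of_mem_divisors hd)
  rw [Finset.mul_sum]
  have himg : (Finset.Icc 1 (N / d)).image (fun m => d * m)
      = (Finset.Icc 1 N).filter (d ∣ ·) := by
    ext n
    simp only [Finset.mem_image, Finset.mem_filter, Finset.mem_Icc]
    constructor
    · rintro ⟨m, ⟨hm1, hm2⟩, rfl⟩
      refine ⟨⟨Nat.one_le_iff_ne_zero.mpr (by positivity), ?_⟩, Dvd.intro m rfl⟩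
      calc d * m ≤ d * (N / d) := Nat.mul_le_mul_left d hm2
        _ ≤ N := Nat.mul_div_le N d
    · rintro ⟨⟨hn1, hn2⟩, e, rfl⟩
      refine ⟨e, ⟨?_, ?_⟩, rfl⟩
      · exact Nat.one_le_iff_ne_zero.mpr (by rintro rfl; omega)
      · exact (Nat.le_div_iff_mul_le (by omega)).mpr (le_of_eq_of_le (mul_comm e d) hn2)
  rw [← himg, Finset.sum_image (fun x _ y _ hxy => by
    exact mul_left_cancel₀ (by omega) hxy)]
  apply Finset.sum_congr rfl
  intro m hm
  push_cast
  ring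


theorem stmt_0 : ∃ C : ℝ, 0 < C ∧ ∀ (q : ℕ) (x : ℝ), 0 < q → 1 ≤ x →
    |(∑ n ∈ (Finset.Icc 1 ⌊x⌋₊).filter (fun n => Nat.gcd n q = 1), (1 : ℝ) / n) -
      ((Nat.totient q : ℝ) / q) *
        (Real.log x + (∑ p ∈ q.primeFactors, Real.log p / (p - 1)) +
          Real.eulerMascheroniConstant)| ≤ C * ((q.divisors.card : ℝ) / x) := by
  refine ⟨2, by norm_num, ?_⟩
  intro q x hq hx
  have hq0 : q ≠ 0 := hq.ne'
  have hx0 : (0:ℝ) < x := by linarith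
  set γ := Real.eulerMascheroniConstant with hγdef
  have hγ0 : 0 < γ := lt_trans (by norm_num) Real.one_half_lt_eulerMascheroniConstant
  have hγ1 : γ < 1 := lt_trans Real.eulerMascheroniConstant_lt_two_thirds (by norm_num)
  have hmain : ∑ d ∈ q.divisors, (moebius d : ℝ)/d * (Real.log x - Real.log d + γ)
      = ((Nat.totient q : ℝ) / q) *
        (Real.log x + (∑ p ∈ q.primeFactors, Real.log p / ((p:ℝ) - 1)) + γ) := by
    have e : ∀ d ∈ q.divisors, (moebius d : ℝ)/d * (Real.log x - Real.log d + γ)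
        = (moebius d : ℝ)/d * (Real.log x + γ) - (moebius d : ℝ) * Real.log d / d := by
      intro d _; ring
    rw [Finset.sum_congr rfl e, Finset.sum_sub_distrib, ← Finset.sum_mul,
      identity1 hq0, identity2 hq0]
    ring
  have key : ∀ d ∈ q.divisors,
      |(moebius d : ℝ) * ∑ m ∈ Finset.Icc 1 (⌊x⌋₊ / d), (1:ℝ)/(d * m)
        - (moebius d : ℝ)/d * (Real.log x - Real.log d + γ)| ≤ 2 / x := by
    intro d hd
    have hd1 : 1 ≤ d := Nat.pos_of_mem_divisors hd
    have hdR : (1:ℝ) ≤ d := by exact_mod_cast hd1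
    have hd0 : (d:ℝ) ≠ 0 := by positivity
    have hfl : ⌊x⌋₊ / d = ⌊x/d⌋₊ := (Nat.floor_div_natCast x d).symm
    have hmuabs : |(moebius d : ℝ)| ≤ 1 := by
      have := abs_moebius_le_one (n := d)
      exact_mod_cast (by exact_mod_cast this : ((|moebius d| : ℤ) : ℝ) ≤ 1)
    have hinner : (∑ m ∈ Finset.Icc 1 (⌊x⌋₊ / d), (1:ℝ)/(d * m))
        = (1/d) * (harmonic ⌊x/d⌋₊ : ℝ) := by
      rw [hfl, ← harm_eq, Finset.mul_sum]
      apply Finset.sum_congr rfl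
      intro m hm
      have hm1 : 1 ≤ m := (Finset.mem_Icc.mp hm).1
      have hm0 : (m:ℝ) ≠ 0 := by positivity
      push_cast
      field_simp
    have hlogd : Real.log x - Real.log d = Real.log (x / d) :=
      (Real.log_div hx0.ne' hd0).symm
    rw [hinner, hlogd]
    rcases le_or_gt (d:ℝ) x with hdx | hdx
    · have hyd : 1 ≤ x / d := (one_le_div (by positivity)).mpr hdx
      have hb := harm_bound hyd
      have heq : (moebius d : ℝ) * ((1/d) * (harmonic ⌊x/d⌋₊ : ℝ))
          - (moebius d : ℝ)/d * (Real.log (x/d) + γ)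
          = ((moebius d : ℝ)/d) * ((harmonic ⌊x/d⌋₊ : ℝ) - (Real.log (x/d) + γ)) := by
        ring
      rw [heq, abs_mul]
      have h1 : |(moebius d : ℝ)/d| ≤ 1/d := by
        rw [abs_div, abs_of_nonneg (by positivity : (0:ℝ) ≤ (d:ℝ))]
        exact div_le_div_of_nonneg_right hmuabs (by positivity) |>.trans_eq rfl
      calc |(moebius d : ℝ)/d| * |(harmonic ⌊x/d⌋₊ : ℝ) - (Real.log (x/d) + γ)|
          ≤ (1/d) * (2 / (x/d)) :=
            mul_le_mul h1 hb (abs_nonneg _) (by positivity)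
        _ = 2 / x := by field_simp
    · have hfl0 : ⌊x/d⌋₊ = 0 := by
        apply Nat.floor_eq_zero.mpr
        rw [div_lt_one (by positivity)]
        exact hdx
      rw [hfl0]
      simp only [harmonic_zero, Rat.cast_zero, mul_zero, zero_sub, abs_neg]
      rw [abs_mul, abs_div, abs_of_nonneg (by positivity : (0:ℝ) ≤ (d:ℝ))]
      have hlogxd : Real.log (x/d) = -Real.log (d/x) := by
        rw [← Real.log_inv]
        congr 1
        field_simp
      have hlogpos : 0 ≤ Real.log ((d:ℝ)/x) :=
        Real.log_nonneg ((one_le_div hx0).mpr hdx.le)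
      have habs2 : |Real.log (x/d) + γ| ≤ Real.log ((d:ℝ)/x) + γ := by
        rw [hlogxd, abs_le]
        constructor <;> [linarith; linarith]
      have hD : Real.log ((d:ℝ)/x) ≤ (d:ℝ)/x - 1 :=
        Real.log_le_sub_one_of_pos (by positivity)
      have hstep : |(moebius d : ℝ)|/d * |Real.log (x/d) + γ|
          ≤ (1/d) * (Real.log ((d:ℝ)/x) + γ) := by
        apply mul_le_mul _ habs2 (abs_nonneg _) (by positivity)
        rw [div_le_div_iff₀ (by positivity) (by positivity)]
        nlinarith
      have h2 : (1/(d:ℝ)) * (Real.log ((d:ℝ)/x) + γ) ≤ 1/x := by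
        have hle : Real.log ((d:ℝ)/x) + γ ≤ (d:ℝ)/x := by linarith
        calc (1/(d:ℝ)) * (Real.log ((d:ℝ)/x) + γ) ≤ (1/(d:ℝ)) * ((d:ℝ)/x) :=
              mul_le_mul_of_nonneg_left hle (by positivity)
          _ = 1/x := by field_simp
      have h3 : (1:ℝ)/x ≤ 2/x := by gcongr <;> norm_num
      linarith
  rw [mobius_rearrange hq ⌊x⌋₊, ← hmain, ← Finset.sum_sub_distrib]
  calc |∑ d ∈ q.divisors, ((moebius d : ℝ) * ∑ m ∈ Finset.Icc 1 (⌊x⌋₊ / d), (1:ℝ)/(d * m)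
        - (moebius d : ℝ)/d * (Real.log x - Real.log d + γ))|
      ≤ ∑ d ∈ q.divisors, |(moebius d : ℝ) * ∑ m ∈ Finset.Icc 1 (⌊x⌋₊ / d), (1:ℝ)/(d * m)
        - (moebius d : ℝ)/d * (Real.log x - Real.log d + γ)| :=
        Finset.abs_sum_le_sum_abs _ _
    _ ≤ ∑ _d ∈ q.divisors, 2 / x := Finset.sum_le_sum key
    _ = (q.divisors.card : ℝ) * (2 / x) := by rw [Finset.sum_const, nsmul_eq_mul]
    _ = 2 * ((q.divisors.card : ℝ) / x) := by ring
end

section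
/- For every positive integer q, Σ_{d | q} (μ(d)/d) · log d = −(φ(q)/q) · Σ_{p | q} (log p)/(p−1), where the last sum is over primes p dividing q. -/
open Finset Real ArithmeticFunction

/-- Splitting a sum over divisors of a coprime product. -/
lemma aux_sum_divisors_mul_coprime (f : ℕ → ℝ) {m n : ℕ} (h : m.Coprime n) :
    ∑ d ∈ (m * n).divisors, f d = ∑ a ∈ m.divisors, ∑ b ∈ n.divisors, f (a * b) := by
  rw [← Finset.sum_product']
  symm
  apply Finset.sum_nbij' (i := fun p : ℕ × ℕ => p.1 * p.2)
    (j := fun d => (d.gcd m, d.gcd n))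
  · rintro ⟨a, b⟩ hab
    simp only [Finset.mem_product, Nat.mem_divisors] at hab
    exact Nat.mem_divisors.2 ⟨mul_dvd_mul hab.1.1 hab.2.1,
      mul_ne_zero hab.1.2 hab.2.2⟩
  · intro d hd
    simp only [Nat.mem_divisors] at hd
    have hmn : m * n ≠ 0 := hd.2
    simp only [Finset.mem_product, Nat.mem_divisors]
    exact ⟨⟨Nat.gcd_dvd_right _ _, fun h0 => hmn (by simp [h0])⟩,
      ⟨Nat.gcd_dvd_right _ _, fun h0 => hmn (by simp [h0])⟩⟩
  · rintro ⟨a, b⟩ hab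
    simp only [Finset.mem_product, Nat.mem_divisors] at hab
    have hma : (a * b).gcd m = a := by
      rw [Nat.gcd_comm, Nat.Coprime.gcd_mul_right_cancel_right a
        (Nat.Coprime.coprime_dvd_right hab.2.1 h).symm]
      exact Nat.gcd_eq_right hab.1.1
    have hnb : (a * b).gcd n = b := by
      rw [Nat.gcd_comm, Nat.Coprime.gcd_mul_left_cancel_right b
        (Nat.Coprime.coprime_dvd_left hab.1.1 h)]
      exact Nat.gcd_eq_right hab.2.1
    simp [hma, hnb]
  · intro d hd
    simp only [Nat.mem_divisors] at hd
    have hgcd := (Nat.Coprime.gcd_mul d h).symm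
    rw [Nat.gcd_eq_left hd.1] at hgcd
    simpa using hgcd
  · rintro ⟨a, b⟩ _
    rfl

lemma aux_moebius_mul {a b : ℕ} (h : a.Coprime b) :
    (moebius (a * b) : ℝ) = (moebius a : ℝ) * (moebius b : ℝ) := by
  rw_mod_cast [ArithmeticFunction.isMultiplicative_moebius.map_mul_of_coprime h]

lemma aux_totient_prime_pow (p k : ℕ) (hp : p.Prime) :
    ((p ^ (k + 1)).totient : ℝ) / (p ^ (k + 1) : ℕ) = 1 - 1 / p := by
  have hp0 : (p : ℝ) ≠ 0 := Nat.cast_ne_zero.2 hp.ne_zero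
  rw [Nat.totient_prime_pow hp (Nat.succ_pos k)]
  push_cast [Nat.cast_sub hp.one_lt.le]
  rw [pow_succ]
  field_simp

/-- ∑_{d | n} μ(d)/d = φ(n)/n for n ≠ 0. -/
lemma aux_sum_moebius_div (n : ℕ) (hn : n ≠ 0) :
    ∑ d ∈ n.divisors, (moebius d : ℝ) / d = (Nat.totient n : ℝ) / n := by
  induction n using Nat.recOnPosPrimePosCoprime with
  | zero => exact absurd rfl hn
  | one => simp
  | prime_pow p k hpp hk =>
      obtain ⟨k, rfl⟩ : ∃ k', k = k' + 1 := ⟨k - 1, by omega⟩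
      have hp0 : (p : ℝ) ≠ 0 := Nat.cast_ne_zero.2 hpp.ne_zero
      rw [Nat.sum_divisors_prime_pow hpp, Finset.sum_range_succ', Finset.sum_range_succ']
      have hz : ∀ i ∈ Finset.range k,
          (moebius (p ^ (i + 1 + 1)) : ℝ) / ((p ^ (i + 1 + 1) : ℕ) : ℝ) = 0 := by
        intro i _
        rw [ArithmeticFunction.moebius_apply_prime_pow hpp (by omega)]
        simp [show ¬ (i + 1 + 1 = 1) by omega]
      rw [Finset.sum_congr rfl hz, Finset.sum_const_zero, aux_totient_prime_pow p k hpp]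
      simp [ArithmeticFunction.moebius_apply_prime hpp]
      field_simp
      ring
  | coprime a b ha hb hab iha ihb =>
      have ha0 : a ≠ 0 := by omega
      have hb0 : b ≠ 0 := by omega
      rw [aux_sum_divisors_mul_coprime _ hab]
      have key : ∀ x ∈ a.divisors, ∀ y ∈ b.divisors,
          (moebius (x * y) : ℝ) / (x * y : ℕ) = ((moebius x : ℝ) / x) * ((moebius y : ℝ) / y) := by
        intro x hx y hy
        have hxy : x.Coprime y := Nat.Coprime.coprime_dvd_left (Nat.dvd_of_mem_divisors hx)
          (Nat.Coprime.coprime_dvd_right (Nat.dvd_of_mem_divisors hy) hab)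
        rw [aux_moebius_mul hxy]
        push_cast
        ring
      calc ∑ x ∈ a.divisors, ∑ y ∈ b.divisors, (moebius (x * y) : ℝ) / (x * y : ℕ)
          = ∑ x ∈ a.divisors, ∑ y ∈ b.divisors,
            ((moebius x : ℝ) / x) * ((moebius y : ℝ) / y) :=
            Finset.sum_congr rfl fun x hx => Finset.sum_congr rfl fun y hy => key x hx y hy
        _ = (∑ x ∈ a.divisors, (moebius x : ℝ) / x) * (∑ y ∈ b.divisors, (moebius y : ℝ) / y) :=
            by rw [← Finset.sum_mul_sum]
        _ = (Nat.totient (a * b) : ℝ) / ((a * b : ℕ) : ℝ) := by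
            rw [iha ha0, ihb hb0, Nat.totient_mul hab]
            push_cast
            ring

theorem stmt_3 (q : ℕ) (hq : 0 < q) :
    (∑ d ∈ q.divisors, ((ArithmeticFunction.moebius d : ℝ) / d) * Real.log d) =
      -(((Nat.totient q : ℝ) / q) * ∑ p ∈ q.primeFactors, Real.log p / (p - 1)) := by
  induction q using Nat.recOnPosPrimePosCoprime with
  | zero => exact absurd hq (by omega)
  | one => simp
  | prime_pow p k hpp hk =>
      obtain ⟨k, rfl⟩ : ∃ k', k = k' + 1 := ⟨k - 1, by omega⟩
      have hp0 : (p : ℝ) ≠ 0 := Nat.cast_ne_zero.2 hpp.ne_zero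
      have hp1 : (p : ℝ) - 1 ≠ 0 := by
        have : (2 : ℝ) ≤ p := by exact_mod_cast hpp.two_le
        linarith
      rw [Nat.sum_divisors_prime_pow hpp, Finset.sum_range_succ', Finset.sum_range_succ']
      have hz : ∀ i ∈ Finset.range k,
          (moebius (p ^ (i + 1 + 1)) : ℝ) / ((p ^ (i + 1 + 1) : ℕ) : ℝ) *
            Real.log (p ^ (i + 1 + 1) : ℕ) = 0 := by
        intro i _
        rw [ArithmeticFunction.moebius_apply_prime_pow hpp (by omega)]
        simp [show ¬ (i + 1 + 1 = 1) by omega]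
      rw [Finset.sum_congr rfl hz, Finset.sum_const_zero,
        Nat.primeFactors_prime_pow (Nat.succ_ne_zero k) hpp, Finset.sum_singleton,
        aux_totient_prime_pow p k hpp]
      simp only [pow_one, pow_zero, Nat.cast_one, Real.log_one, mul_zero, add_zero, zero_add,
        ArithmeticFunction.moebius_apply_prime hpp]
      push_cast
      field_simp
  | coprime a b ha hb hab iha ihb =>
      have ha0 : a ≠ 0 := by omega
      have hb0 : b ≠ 0 := by omega
      have ha0' : (a : ℝ) ≠ 0 := Nat.cast_ne_zero.2 ha0
      have hb0' : (b : ℝ) ≠ 0 := Nat.cast_ne_zero.2 hb0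
      rw [aux_sum_divisors_mul_coprime _ hab]
      have key : ∀ x ∈ a.divisors, ∀ y ∈ b.divisors,
          (moebius (x * y) : ℝ) / (x * y : ℕ) * Real.log (x * y : ℕ) =
            ((moebius x : ℝ) / x) * ((moebius y : ℝ) / y) * (Real.log x + Real.log y) := by
        intro x hx y hy
        have hx0 : (x : ℝ) ≠ 0 := Nat.cast_ne_zero.2 (Nat.pos_of_mem_divisors hx).ne'
        have hy0 : (y : ℝ) ≠ 0 := Nat.cast_ne_zero.2 (Nat.pos_of_mem_divisors hy).ne'
        have hxy : x.Coprime y := Nat.Coprime.coprime_dvd_left (Nat.dvd_of_mem_divisors hx)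
          (Nat.Coprime.coprime_dvd_right (Nat.dvd_of_mem_divisors hy) hab)
        rw [aux_moebius_mul hxy]
        push_cast
        rw [Real.log_mul hx0 hy0]
        ring
      rw [Finset.sum_congr rfl fun x hx => Finset.sum_congr rfl fun y hy => key x hx y hy]
      have expand :
          ∑ x ∈ a.divisors, ∑ y ∈ b.divisors,
            ((moebius x : ℝ) / x) * ((moebius y : ℝ) / y) * (Real.log x + Real.log y) =
          (∑ x ∈ a.divisors, ((moebius x : ℝ) / x) * Real.log x) *
              (∑ y ∈ b.divisors, (moebius y : ℝ) / y) +
            (∑ x ∈ a.divisors, (moebius x : ℝ) / x) *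
              (∑ y ∈ b.divisors, ((moebius y : ℝ) / y) * Real.log y) := by
        rw [Finset.sum_mul_sum, Finset.sum_mul_sum, ← Finset.sum_add_distrib]
        refine Finset.sum_congr rfl fun x _ => ?_
        rw [← Finset.sum_add_distrib]
        refine Finset.sum_congr rfl fun y _ => ?_
        ring
      rw [expand, aux_sum_moebius_div a ha0, aux_sum_moebius_div b hb0,
        iha (by omega), ihb (by omega), Nat.totient_mul hab,
        Nat.Coprime.primeFactors_mul hab,
        Finset.sum_union (Nat.Coprime.disjoint_primeFactors hab)]
      push_cast
      ring
end

section
/- For every positive integer q, (1/q) · Σ_{1 ≤ k ≤ q, gcd(k,q)=1} (−ψ(k/q) − γ) = (φ(q)/q) · (log q + Σ_{p | q} (log p)/(p−1)), where ψ is the digamma function, γ is Euler's constant, φ is Euler's totient, and the sum Σ_{p | q} is over primes dividing q. -/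
open Finset Real Filter Topology ArithmeticFunction
open scoped ArithmeticFunction.Moebius ArithmeticFunction.zeta

noncomputable def digamma (z : ℝ) : ℝ :=
  -Real.eulerMascheroniConstant - ∑' n : ℕ, (1 - z) / ((n + z) * (n + 1))

noncomputable def Hh (n : ℕ) : ℝ := ∑ i ∈ Finset.range n, ((i : ℝ) + 1)⁻¹

lemma Hh_eq (n : ℕ) : Hh n = (harmonic n : ℝ) := by
  rw [harmonic]
  push_cast
  rfl

lemma Hh_tendsto : Tendsto (fun n : ℕ => Hh n - Real.log n) atTop (𝓝 Real.eulerMascheroniConstant) := by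
  simp_rw [Hh_eq]
  exact Real.tendsto_harmonic_sub_log

lemma summable_aux {z : ℝ} (hz0 : 0 < z) (hz1 : z ≤ 1) :
    Summable (fun n : ℕ => ((n : ℝ) + z)⁻¹ - ((n : ℝ) + 1)⁻¹) := by
  have hnonneg : ∀ n : ℕ, 0 ≤ ((n : ℝ) + z)⁻¹ - ((n : ℝ) + 1)⁻¹ := by
    intro n
    have h1 : (0:ℝ) < (n : ℝ) + z := by positivity
    have : ((n : ℝ) + z) ≤ (n : ℝ) + 1 := by linarith
    have := inv_anti₀ h1 this
    linarith
  apply summable_of_sum_range_le hnonneg (c := z⁻¹)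
  intro N
  have hle : ∀ n : ℕ, ((n : ℝ) + z)⁻¹ - ((n : ℝ) + 1)⁻¹ ≤
      ((n : ℝ) + z)⁻¹ - (((n+1 : ℕ) : ℝ) + z)⁻¹ := by
    intro n
    have h1 : (0:ℝ) < (n : ℝ) + 1 := by positivity
    have : ((n : ℝ) + 1) ≤ ((n+1:ℕ) : ℝ) + z := by push_cast; linarith
    have := inv_anti₀ h1 this
    linarith
  calc ∑ n ∈ range N, (((n : ℝ) + z)⁻¹ - ((n : ℝ) + 1)⁻¹)
      ≤ ∑ n ∈ range N, (((n : ℝ) + z)⁻¹ - (((n+1 : ℕ) : ℝ) + z)⁻¹) :=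
        Finset.sum_le_sum (fun n _ => hle n)
    _ = ((0:ℕ) + z)⁻¹ - ((N : ℝ) + z)⁻¹ := by
        rw [Finset.sum_range_sub' (fun n : ℕ => ((n : ℝ) + z)⁻¹)]
    _ ≤ z⁻¹ := by
        have h1 : (0:ℝ) < (N : ℝ) + z := by positivity
        have : 0 ≤ ((N : ℝ) + z)⁻¹ := by positivity
        simp only [Nat.cast_zero, zero_add]
        linarith

lemma digamma_eq {z : ℝ} (hz0 : 0 < z) :
    -digamma z - Real.eulerMascheroniConstant
      = ∑' n : ℕ, (((n : ℝ) + z)⁻¹ - ((n : ℝ) + 1)⁻¹) := by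
  rw [digamma]
  ring_nf
  rw [tsum_congr (fun n : ℕ => ?_)]
  have h1 : ((n : ℝ) + z) ≠ 0 := by positivity
  have h2 : ((n : ℝ) + 1) ≠ 0 := by positivity
  field_simp
  ring

lemma claimA (m n : ℕ) (hm : 0 < m) :
    ∑ k ∈ Icc 1 m, ((n : ℝ) + (k : ℝ) / m)⁻¹ = m * (Hh (m * (n+1)) - Hh (m * n)) := by
  have hmR : (0:ℝ) < m := by exact_mod_cast hm
  have h1 : Hh (m * (n+1)) - Hh (m * n) = ∑ i ∈ range m, (((m * n + i : ℕ) : ℝ) + 1)⁻¹ := by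
    have : m * (n+1) = m * n + m := by ring
    rw [this, Hh, Finset.sum_range_add, Hh]
    ring
  rw [h1, Finset.mul_sum]
  rw [show Icc 1 m = Finset.Ico 1 (m+1) by rfl, Finset.sum_Ico_eq_sum_range]
  simp only [Nat.add_sub_cancel]
  refine Finset.sum_congr rfl (fun i _ => ?_)
  have hx : (0:ℝ) < (m * n + i : ℕ) + 1 := by positivity
  have key : (n : ℝ) + ((1 + i : ℕ) : ℝ) / m = (((m * n + i : ℕ) : ℝ) + 1) / m := by
    field_simp
    push_cast
    ring
  rw [key, inv_div, div_eq_mul_inv]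

lemma claimB (m n : ℕ) :
    ∑ k ∈ Icc 1 m, ((n : ℝ) + 1)⁻¹ = m * (Hh (n+1) - Hh n) := by
  rw [Finset.sum_const, Nat.card_Icc, Hh, Finset.sum_range_succ, Hh]
  simp [nsmul_eq_mul]

lemma gauss (m : ℕ) (hm : 0 < m) :
    ∑ k ∈ Icc 1 m, (-digamma ((k : ℝ) / m) - Real.eulerMascheroniConstant)
      = m * Real.log m := by
  have hmR : (0:ℝ) < m := by exact_mod_cast hm
  set f : ℕ → ℕ → ℝ := fun k n => ((n : ℝ) + (k:ℝ)/m)⁻¹ - ((n : ℝ) + 1)⁻¹ with hf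
  have hsum : ∀ k ∈ Icc 1 m, Summable (f k) := by
    intro k hk
    rw [Finset.mem_Icc] at hk
    have h0 : (0:ℝ) < (k:ℝ)/m := by
      have : (0:ℝ) < (k:ℝ) := by exact_mod_cast hk.1
      positivity
    have h1 : (k:ℝ)/m ≤ 1 := by
      rw [div_le_one hmR]
      exact_mod_cast hk.2
    exact summable_aux h0 h1
  have step1 : ∑ k ∈ Icc 1 m, (-digamma ((k : ℝ) / m) - Real.eulerMascheroniConstant)
      = ∑ k ∈ Icc 1 m, ∑' n : ℕ, f k n := by
    refine Finset.sum_congr rfl (fun k hk => ?_)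
    rw [Finset.mem_Icc] at hk
    have h0 : (0:ℝ) < (k:ℝ)/m := by
      have : (0:ℝ) < (k:ℝ) := by exact_mod_cast hk.1
      positivity
    exact digamma_eq h0
  rw [step1, ← Summable.tsum_finsetSum hsum]
  set a : ℕ → ℝ := fun N => m * (Hh (m * N) - Hh N) with ha
  have key : ∀ n : ℕ, ∑ k ∈ Icc 1 m, f k n = a (n+1) - a n := by
    intro n
    rw [hf]
    rw [Finset.sum_sub_distrib, claimA m n hm, claimB m n, ha]
    ring
  have hg : Summable (fun n : ℕ => ∑ k ∈ Icc 1 m, f k n) := by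
    exact summable_sum hsum
  have hpartial : ∀ N : ℕ, ∑ n ∈ range N, ∑ k ∈ Icc 1 m, f k n = a N := by
    intro N
    simp_rw [key]
    rw [Finset.sum_range_sub a]
    simp [ha, Hh]
  have hlim : Tendsto a atTop (𝓝 (m * Real.log m)) := by
    have hmono : Tendsto (fun N : ℕ => m * N) atTop atTop := by
      apply tendsto_atTop_mono (fun N => Nat.le_mul_of_pos_left N hm) tendsto_id
    have c1 : Tendsto (fun N : ℕ => Hh (m * N) - Real.log (m * N : ℕ)) atTop
        (𝓝 Real.eulerMascheroniConstant) := Hh_tendsto.comp hmono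
    have c2 := Hh_tendsto
    have c3 : Tendsto (fun N : ℕ =>
        (m:ℝ) * ((Hh (m*N) - Real.log (m*N : ℕ)) - (Hh N - Real.log N) + Real.log m)) atTop
        (𝓝 ((m:ℝ) * (Real.eulerMascheroniConstant - Real.eulerMascheroniConstant + Real.log m))) := by
      exact ((c1.sub c2).add tendsto_const_nhds).const_mul _
    simp only [sub_self, zero_add] at c3
    apply c3.congr'
    filter_upwards [eventually_ge_atTop 1] with N hN
    have hN' : (0:ℝ) < N := by exact_mod_cast hN
    have : Real.log ((m*N : ℕ) : ℝ) = Real.log m + Real.log N := by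
      push_cast
      rw [Real.log_mul (ne_of_gt hmR) (ne_of_gt hN')]
    rw [this, ha]
    ring
  have := hg.hasSum.tendsto_sum_nat
  rw [funext hpartial] at this
  exact tendsto_nhds_unique this hlim

lemma moebius_ind (n : ℕ) (hn : n ≠ 0) :
    ∑ d ∈ n.divisors, ((μ d : ℤ) : ℝ) = if n = 1 then 1 else 0 := by
  have h : ((μ : ArithmeticFunction ℝ) * (ζ : ArithmeticFunction ℝ)) n
      = (1 : ArithmeticFunction ℝ) n := by rw [coe_moebius_mul_coe_zeta]
  simp only [mul_apply, one_apply] at h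
  rw [← h, ← Nat.sum_divisorsAntidiagonal (f := fun d e => ((μ d : ℤ) : ℝ))]
  refine Finset.sum_congr rfl (fun x hx => ?_)
  have hx2 : x.2 ≠ 0 := Nat.pos_of_mem_divisors (Nat.snd_mem_divisors_of_mem_antidiagonal hx) |>.ne'
  simp [intCoe_apply, natCoe_apply, zeta_apply, hx2]

lemma tot_eq (n : ℕ) (hn : 0 < n) :
    ∑ d ∈ n.divisors, ((μ d : ℤ) : ℝ) * ((n / d : ℕ) : ℝ) = (Nat.totient n : ℝ) := by
  have key := (sum_eq_iff_sum_mul_moebius_eq (R := ℝ)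
      (f := fun d => (Nat.totient d : ℝ)) (g := fun n => (n : ℝ))).mp ?_ n hn
  · rw [← key, ← Nat.sum_divisorsAntidiagonal (f := fun d e => ((μ d : ℤ) : ℝ) * (e : ℝ))]
  · intro n hn
    exact_mod_cast congrArg (Nat.cast : ℕ → ℝ) (Nat.sum_totient n)

lemma gcd_divisors (q k : ℕ) (hq : q ≠ 0) :
    (Nat.gcd k q).divisors = q.divisors.filter (· ∣ k) := by
  ext d
  simp only [Nat.mem_divisors, Finset.mem_filter, Nat.dvd_gcd_iff]
  constructor
  · rintro ⟨⟨h1, h2⟩, -⟩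
    exact ⟨⟨h2, hq⟩, h1⟩
  · rintro ⟨⟨h2, -⟩, h1⟩
    exact ⟨⟨h1, h2⟩, Nat.gcd_ne_zero_right hq⟩

lemma moebius_step (q : ℕ) (hq : 0 < q) (h : ℝ → ℝ) :
    ∑ k ∈ (Finset.Icc 1 q).filter (fun k => Nat.gcd k q = 1), h ((k : ℝ) / q)
      = ∑ d ∈ q.divisors, ((μ d : ℤ) : ℝ) *
          ∑ j ∈ Finset.Icc 1 (q / d), h ((j : ℝ) / ((q / d : ℕ) : ℝ)) := by
  have step1 : ∑ k ∈ (Finset.Icc 1 q).filter (fun k => Nat.gcd k q = 1), h ((k : ℝ) / q)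
      = ∑ k ∈ Finset.Icc 1 q, (∑ d ∈ (Nat.gcd k q).divisors, ((μ d : ℤ) : ℝ)) * h ((k : ℝ) / q) := by
    rw [Finset.sum_filter]
    refine Finset.sum_congr rfl (fun k hk => ?_)
    rw [Finset.mem_Icc] at hk
    have hg : Nat.gcd k q ≠ 0 := Nat.gcd_ne_zero_right hq.ne'
    rw [moebius_ind _ hg]
    by_cases hgcd : Nat.gcd k q = 1 <;> simp [hgcd]
  rw [step1]
  have step2 : ∀ k ∈ Finset.Icc 1 q,
      (∑ d ∈ (Nat.gcd k q).divisors, ((μ d : ℤ) : ℝ)) * h ((k : ℝ) / q)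
      = ∑ d ∈ q.divisors, (if d ∣ k then ((μ d : ℤ) : ℝ) * h ((k : ℝ) / q) else 0) := by
    intro k hk
    rw [gcd_divisors q k hq.ne', Finset.sum_mul, Finset.sum_filter]
  rw [Finset.sum_congr rfl step2, Finset.sum_comm]
  refine Finset.sum_congr rfl (fun d hd => ?_)
  rw [Nat.mem_divisors] at hd
  obtain ⟨hdq, hq0⟩ := hd
  have hd0 : d ≠ 0 := by rintro rfl; exact hq0 (Nat.zero_dvd.mp hdq ▸ rfl)
  have hd0' : 0 < d := Nat.pos_of_ne_zero hd0
  rw [← Finset.sum_filter, Finset.mul_sum]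
  refine Finset.sum_nbij' (fun k => k / d) (fun j => d * j) ?_ ?_ ?_ ?_ ?_
  · intro k hk
    simp only [Finset.mem_filter, Finset.mem_Icc] at hk ⊢
    obtain ⟨⟨h1, h2⟩, h3⟩ := hk
    refine ⟨Nat.one_le_div_iff hd0' |>.mpr (Nat.le_of_dvd (by omega) h3), ?_⟩
    exact Nat.div_le_div_right h2
  · intro j hj
    simp only [Finset.mem_filter, Finset.mem_Icc] at hj ⊢
    refine ⟨⟨by nlinarith [hj.1], ?_⟩, Dvd.intro j rfl⟩
    calc d * j ≤ d * (q / d) := Nat.mul_le_mul_left d hj.2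
    _ = q := Nat.mul_div_cancel' hdq
  · intro k hk
    simp only [Finset.mem_filter] at hk
    exact Nat.mul_div_cancel' hk.2
  · intro j _
    exact Nat.mul_div_cancel_left j hd0'
  · intro k hk
    simp only [Finset.mem_filter, Finset.mem_Icc] at hk
    have hdr : (d : ℝ) ≠ 0 := by exact_mod_cast hd0
    have hqr : (q : ℝ) ≠ 0 := by exact_mod_cast hq0
    have hcast : ((q / d : ℕ) : ℝ) = (q : ℝ) / d :=
      Nat.cast_div hdq hdr
    have hkd : ((k / d : ℕ) : ℝ) = (k : ℝ) / d :=
      Nat.cast_div hk.2 hdr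
    have hdd : (k : ℝ) / q = ((k : ℝ) / d) / ((q : ℝ) / d) := by
      field_simp
    congr 2
    show (k : ℝ) / q = ((k / d : ℕ) : ℝ) / ((q / d : ℕ) : ℝ)
    rw [hcast, hkd, ← hdd]

lemma D_eq (q p : ℕ) (hq : 0 < q) (hp : p.Prime) (hpq : p ∣ q) :
    ∑ d ∈ q.divisors.filter (fun d => ¬ p ∣ d), ((μ d : ℤ) : ℝ) * ((q / d : ℕ) : ℝ)
      = (p : ℝ) / ((p : ℝ) - 1) * (Nat.totient q : ℝ) := by
  set a := q.factorization p with ha_def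
  set m := q / p ^ a with hm_def
  have hq0 : q ≠ 0 := hq.ne'
  have hqm : q = p ^ a * m := (Nat.ordProj_mul_ordCompl_eq_self q p).symm
  have hpm : ¬ p ∣ m := Nat.not_dvd_ordCompl hp hq0
  have ha : 0 < a := hp.factorization_pos_of_dvd hq0 hpq
  have hm0 : 0 < m := Nat.ordCompl_pos p hq0
  have hmq : m ∣ q := Nat.ordCompl_dvd q p
  have hfilt : q.divisors.filter (fun d => ¬ p ∣ d) = m.divisors := by
    ext d
    simp only [Finset.mem_filter, Nat.mem_divisors]
    constructor
    · rintro ⟨⟨hdq, -⟩, hpd⟩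
      refine ⟨?_, hm0.ne'⟩
      have hcop : Nat.Coprime d (p ^ a) :=
        (((Nat.Prime.coprime_iff_not_dvd hp).mpr hpd).symm).pow_right a
      exact hcop.dvd_of_dvd_mul_left (hqm ▸ hdq)
    · rintro ⟨hdm, -⟩
      exact ⟨⟨hdm.trans hmq, hq0⟩, fun hpd => hpm (hpd.trans hdm)⟩
  rw [hfilt]
  have key : ∀ d ∈ m.divisors, ((μ d : ℤ) : ℝ) * ((q / d : ℕ) : ℝ)
      = (p : ℝ) ^ a * (((μ d : ℤ) : ℝ) * ((m / d : ℕ) : ℝ)) := by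
    intro d hd
    rw [Nat.mem_divisors] at hd
    have : q / d = p ^ a * (m / d) := by
      rw [hqm, Nat.mul_div_assoc _ hd.1]
    rw [this]
    push_cast
    ring
  rw [Finset.sum_congr rfl key, ← Finset.mul_sum, tot_eq m hm0]
  have htot : (Nat.totient q : ℝ) = (p : ℝ) ^ (a - 1) * ((p : ℝ) - 1) * (Nat.totient m : ℝ) := by
    have hcop : Nat.Coprime (p ^ a) m := ((Nat.Prime.coprime_iff_not_dvd hp).mpr hpm).pow_left a
    rw [hqm, Nat.totient_mul hcop, Nat.totient_prime_pow hp ha]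
    push_cast [Nat.cast_sub hp.one_lt.le]
    ring
  have hp1 : (p : ℝ) - 1 ≠ 0 := by
    have : (2 : ℝ) ≤ (p : ℝ) := by exact_mod_cast hp.two_le
    linarith
  rw [htot]
  field_simp
  have hpa : (p : ℝ) ^ (a - 1) * (p : ℝ) = (p : ℝ) ^ a := by
    rw [← pow_succ, Nat.sub_add_cancel ha]
  rw [← hpa]
  ring

lemma B_eq (q : ℕ) (hq : 0 < q) :
    ∑ d ∈ q.divisors, ((μ d : ℤ) : ℝ) * ((q / d : ℕ) : ℝ) * Real.log d
      = -(Nat.totient q : ℝ) * ∑ p ∈ q.primeFactors, Real.log p / ((p : ℝ) - 1) := by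
  have hq0 : q ≠ 0 := hq.ne'
  have step1 : ∀ d ∈ q.divisors, ((μ d : ℤ) : ℝ) * ((q / d : ℕ) : ℝ) * Real.log d
      = ∑ p ∈ q.primeFactors,
          (if p ∣ d then ((μ d : ℤ) : ℝ) * ((q / d : ℕ) : ℝ) * Real.log p else 0) := by
    intro d hd
    rw [Nat.mem_divisors] at hd
    have hd0 : d ≠ 0 := by rintro rfl; exact hq0 (Nat.zero_dvd.mp hd.1 ▸ rfl)
    by_cases hmu : μ d = 0
    · simp [hmu]
    · have hsq : Squarefree d := moebius_ne_zero_iff_squarefree.mp hmu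
      have hlog : Real.log d = ∑ p ∈ d.primeFactors, Real.log p := by
        have hprod : (d : ℝ) = ∏ p ∈ d.primeFactors, (p : ℝ) := by
          rw [← Nat.cast_prod]
          exact_mod_cast congrArg (Nat.cast (R := ℝ))
            (Nat.prod_primeFactors_of_squarefree hsq).symm
        rw [hprod, Real.log_prod]
        intro p hp
        exact_mod_cast (Nat.prime_of_mem_primeFactors hp).pos.ne'
      have hsub : d.primeFactors = q.primeFactors.filter (· ∣ d) := by
        ext p
        simp only [Finset.mem_filter, Nat.mem_primeFactors]
        constructor
        · rintro ⟨hp, hpd, -⟩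
          exact ⟨⟨hp, hpd.trans hd.1, hq0⟩, hpd⟩
        · rintro ⟨⟨hp, -, -⟩, hpd⟩
          exact ⟨hp, hpd, hd0⟩
      rw [hlog, hsub, Finset.sum_filter, Finset.mul_sum]
      refine Finset.sum_congr rfl (fun p _ => ?_)
      split <;> simp
  rw [Finset.sum_congr rfl step1, Finset.sum_comm]
  have step2 : ∀ p ∈ q.primeFactors,
      ∑ d ∈ q.divisors,
          (if p ∣ d then ((μ d : ℤ) : ℝ) * ((q / d : ℕ) : ℝ) * Real.log p else 0)
      = Real.log p * (-(Nat.totient q : ℝ) / ((p : ℝ) - 1)) := by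
    intro p hp
    obtain ⟨hpp, hpq, -⟩ := Nat.mem_primeFactors.mp hp
    have hp1 : (p : ℝ) - 1 ≠ 0 := by
      have : (2 : ℝ) ≤ (p : ℝ) := by exact_mod_cast hpp.two_le
      linarith
    have hsplit := Finset.sum_filter_add_sum_filter_not q.divisors (fun d => p ∣ d)
      (fun d => ((μ d : ℤ) : ℝ) * ((q / d : ℕ) : ℝ))
    have htot := tot_eq q hq
    have hD := D_eq q p hq hpp hpq
    have hfil : ∑ d ∈ q.divisors.filter (fun d => p ∣ d),
        ((μ d : ℤ) : ℝ) * ((q / d : ℕ) : ℝ)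
        = (Nat.totient q : ℝ) - (p : ℝ) / ((p : ℝ) - 1) * (Nat.totient q : ℝ) := by
      rw [← hD, ← htot, ← hsplit]
      ring
    rw [← Finset.sum_filter]
    have : ∀ d ∈ q.divisors.filter (fun d => p ∣ d),
        ((μ d : ℤ) : ℝ) * ((q / d : ℕ) : ℝ) * Real.log p
        = Real.log p * (((μ d : ℤ) : ℝ) * ((q / d : ℕ) : ℝ)) := by
      intro d _
      ring
    rw [Finset.sum_congr rfl this, ← Finset.mul_sum, hfil]
    field_simp
    ring
  rw [Finset.sum_congr rfl step2, Finset.mul_sum]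
  refine Finset.sum_congr rfl (fun p _ => ?_)
  ring


theorem stmt_6 (q : ℕ) (hq : 0 < q) :
    (1 / (q : ℝ)) * ∑ k ∈ (Finset.Icc 1 q).filter (fun k => Nat.gcd k q = 1),
        (-digamma (k / q) - Real.eulerMascheroniConstant) =
      ((Nat.totient q : ℝ) / q) *
        (Real.log q + ∑ p ∈ q.primeFactors, Real.log p / (p - 1)) := by
  have hq0 : q ≠ 0 := hq.ne'
  have hqR : (q : ℝ) ≠ 0 := by exact_mod_cast hq0
  have h1 : ∑ k ∈ (Finset.Icc 1 q).filter (fun k => Nat.gcd k q = 1),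
      (-digamma ((k : ℝ) / q) - Real.eulerMascheroniConstant)
      = ∑ d ∈ q.divisors, ((μ d : ℤ) : ℝ) *
          (((q / d : ℕ) : ℝ) * Real.log ((q / d : ℕ) : ℝ)) := by
    rw [moebius_step q hq (fun x => -digamma x - Real.eulerMascheroniConstant)]
    refine Finset.sum_congr rfl (fun d hd => ?_)
    obtain ⟨hdq, -⟩ := Nat.mem_divisors.mp hd
    have hd0 : 0 < d := Nat.pos_of_mem_divisors hd
    have hqd : 0 < q / d := Nat.div_pos (Nat.le_of_dvd hq hdq) hd0
    rw [gauss (q / d) hqd]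
  rw [h1]
  have h2 : ∀ d ∈ q.divisors, ((μ d : ℤ) : ℝ) *
      (((q / d : ℕ) : ℝ) * Real.log ((q / d : ℕ) : ℝ))
      = Real.log q * (((μ d : ℤ) : ℝ) * ((q / d : ℕ) : ℝ))
        - ((μ d : ℤ) : ℝ) * ((q / d : ℕ) : ℝ) * Real.log d := by
    intro d hd
    obtain ⟨hdq, -⟩ := Nat.mem_divisors.mp hd
    have hd0 : d ≠ 0 := (Nat.pos_of_mem_divisors hd).ne'
    have hdR : (d : ℝ) ≠ 0 := by exact_mod_cast hd0
    have hcast : ((q / d : ℕ) : ℝ) = (q : ℝ) / d := Nat.cast_div hdq hdR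
    rw [hcast, Real.log_div hqR hdR]
    ring
  rw [Finset.sum_congr rfl h2, Finset.sum_sub_distrib, ← Finset.mul_sum,
    tot_eq q hq, B_eq q hq]
  ring
end

section
/- For every non-principal Dirichlet character χ of modulus q ≥ 2, |L(1,χ)| < (φ(q)/q) · (log q + Σ_{p | q} (log p)/(p−1)), where the sum is over primes p dividing q. -/
open Finset Real Filter

lemma my_sum_range_mul {M : Type*} [AddCommMonoid M] (f : ℕ → M) (K m : ℕ) :
    ∑ n ∈ Finset.range (K * m), f n = ∑ k ∈ Finset.range K, ∑ r ∈ Finset.range m, f (k * m + r) := by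
  induction K with
  | zero => simp
  | succ K ih =>
    have hsplit : ∑ n ∈ Finset.range (K * m + m), f n
        = ∑ n ∈ Finset.range (K * m), f n + ∑ i ∈ Finset.Ico (K * m) (K * m + m), f i := by
      rw [Finset.range_eq_Ico,
        ← Finset.sum_Ico_consecutive f (Nat.zero_le _) (Nat.le_add_right _ m), ← Finset.range_eq_Ico]
    have htail : ∑ i ∈ Finset.Ico (K * m) (K * m + m), f i
        = ∑ r ∈ Finset.range m, f (K * m + r) := by
      rw [Finset.sum_Ico_eq_sum_range]; simp
    rw [Finset.sum_range_succ _ K, ← ih, Nat.succ_mul, hsplit, htail]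

noncomputable def Hs (n : ℕ) : ℝ := ∑ i ∈ Finset.range n, 1 / (i + 1 : ℝ)

lemma Hs_eq (n : ℕ) : Hs n = (harmonic n : ℝ) := by
  simp [Hs, harmonic, one_div]

lemma tendsto_Hs_mul_sub (m : ℕ) (hm : 1 ≤ m) :
    Tendsto (fun K : ℕ => Hs (K * m) - Hs K) atTop (nhds (Real.log m)) := by
  have h1 : Tendsto (fun K : ℕ => K * m) atTop atTop :=
    tendsto_atTop_mono (fun K => Nat.le_mul_of_pos_right K hm) tendsto_id
  have h2 : Tendsto (fun K : ℕ => Hs (K * m) - Real.log (K * m)) atTop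
      (nhds Real.eulerMascheroniConstant) := by
    have := (Real.tendsto_harmonic_sub_log.comp h1)
    refine this.congr fun K => ?_
    simp [Function.comp, Hs_eq]
  have h3 : Tendsto (fun K : ℕ => Hs K - Real.log K) atTop
      (nhds Real.eulerMascheroniConstant) := by
    refine Real.tendsto_harmonic_sub_log.congr fun K => by simp [Hs_eq]
  have h4 := (h2.sub h3).add_const (Real.log m)
  rw [sub_self, zero_add] at h4
  refine h4.congr' ?_
  filter_upwards [eventually_ge_atTop 1] with K hK
  have hK0 : (K : ℝ) ≠ 0 := by positivity
  have hm0 : (m : ℝ) ≠ 0 := by positivity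
  rw [Real.log_mul hK0 hm0]
  ring

lemma key_A (t : Finset ℕ) :
    ∑ S ∈ t.powerset, (-1 : ℝ) ^ S.card * (∏ p ∈ S, (p : ℝ))⁻¹
      = ∏ p ∈ t, (1 - (p : ℝ)⁻¹) := by
  classical
  induction t using Finset.induction_on with
  | empty => simp
  | insert a t ha ih =>
    rw [Finset.sum_powerset_insert ha, Finset.prod_insert ha, ← ih]
    have h1 : ∀ S ∈ t.powerset, (-1 : ℝ) ^ (insert a S).card * (∏ p ∈ insert a S, (p : ℝ))⁻¹
        = (-(a : ℝ)⁻¹) * ((-1 : ℝ) ^ S.card * (∏ p ∈ S, (p : ℝ))⁻¹) := by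
      intro S hS
      have haS : a ∉ S := fun h => ha (Finset.mem_powerset.mp hS h)
      rw [Finset.card_insert_of_notMem haS, Finset.prod_insert haS, pow_succ, mul_inv]
      ring
    rw [Finset.sum_congr rfl h1, ← Finset.mul_sum]
    ring

lemma key_B (t : Finset ℕ) (ht : ∀ p ∈ t, 2 ≤ p) :
    ∑ S ∈ t.powerset, (-1 : ℝ) ^ S.card * (∏ p ∈ S, (p : ℝ))⁻¹ * (∑ p ∈ S, Real.log p)
      = -(∏ p ∈ t, (1 - (p : ℝ)⁻¹)) * ∑ p ∈ t, Real.log p / ((p : ℝ) - 1) := by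
  classical
  induction t using Finset.induction_on with
  | empty => simp
  | insert a t ha ih =>
    have ha2 : 2 ≤ a := ht a (Finset.mem_insert_self a t)
    have ht' : ∀ p ∈ t, 2 ≤ p := fun p hp => ht p (Finset.mem_insert_of_mem hp)
    have ha0 : (a : ℝ) ≠ 0 := by positivity
    have ha1 : (a : ℝ) - 1 ≠ 0 := by
      have : (2 : ℝ) ≤ a := by exact_mod_cast ha2
      nlinarith
    rw [Finset.sum_powerset_insert ha, Finset.prod_insert ha, Finset.sum_insert ha, ih ht']
    have h1 : ∀ S ∈ t.powerset,
        (-1 : ℝ) ^ (insert a S).card * (∏ p ∈ insert a S, (p : ℝ))⁻¹ * (∑ p ∈ insert a S, Real.log p)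
        = (-(a : ℝ)⁻¹) * ((-1 : ℝ) ^ S.card * (∏ p ∈ S, (p : ℝ))⁻¹ * (∑ p ∈ S, Real.log p))
          + (-(a : ℝ)⁻¹ * Real.log a) * ((-1 : ℝ) ^ S.card * (∏ p ∈ S, (p : ℝ))⁻¹) := by
      intro S hS
      have haS : a ∉ S := fun h => ha (Finset.mem_powerset.mp hS h)
      rw [Finset.card_insert_of_notMem haS, Finset.prod_insert haS, Finset.sum_insert haS,
        pow_succ, mul_inv]
      ring
    rw [Finset.sum_congr rfl h1, Finset.sum_add_distrib, ← Finset.mul_sum, ← Finset.mul_sum,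
      ih ht', key_A]
    field_simp
    ring

lemma tot_prod (q : ℕ) (hq : 2 ≤ q) :
    (Nat.totient q : ℝ) / q = ∏ p ∈ q.primeFactors, (1 - (p : ℝ)⁻¹) := by
  have hq0 : (q : ℝ) ≠ 0 := by positivity
  have h := Nat.totient_mul_prod_primeFactors q
  have hcast : (Nat.totient q : ℝ) * ∏ p ∈ q.primeFactors, (p : ℝ)
      = (q : ℝ) * ∏ p ∈ q.primeFactors, ((p : ℝ) - 1) := by
    have h2 : ((∏ p ∈ q.primeFactors, (p - 1) : ℕ) : ℝ)
        = ∏ p ∈ q.primeFactors, ((p : ℝ) - 1) := by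
      rw [Nat.cast_prod]
      refine Finset.prod_congr rfl fun p hp => ?_
      have := (Nat.prime_of_mem_primeFactors hp).one_lt
      push_cast [Nat.cast_sub this.le]
      ring
    calc (Nat.totient q : ℝ) * ∏ p ∈ q.primeFactors, (p : ℝ)
        = ((Nat.totient q * ∏ p ∈ q.primeFactors, p : ℕ) : ℝ) := by push_cast; ring
      _ = ((q * ∏ p ∈ q.primeFactors, (p - 1) : ℕ) : ℝ) := by rw [h]
      _ = (q : ℝ) * ∏ p ∈ q.primeFactors, ((p : ℝ) - 1) := by rw [Nat.cast_mul, h2]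
  have hprod0 : ∏ p ∈ q.primeFactors, (p : ℝ) ≠ 0 := by
    refine Finset.prod_ne_zero_iff.mpr fun p hp => ?_
    have := (Nat.prime_of_mem_primeFactors hp).pos
    positivity
  have : (Nat.totient q : ℝ) / q
      = (∏ p ∈ q.primeFactors, ((p : ℝ) - 1)) / ∏ p ∈ q.primeFactors, (p : ℝ) := by
    field_simp
    linarith [hcast]
  rw [this, ← Finset.prod_div_distrib]
  refine Finset.prod_congr rfl fun p hp => ?_
  have hp0 : (p : ℝ) ≠ 0 := by
    have := (Nat.prime_of_mem_primeFactors hp).pos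
    positivity
  field_simp

lemma moebius_prod_primes (S : Finset ℕ) (h : ∀ p ∈ S, p.Prime) :
    ArithmeticFunction.moebius (∏ p ∈ S, p) = (-1 : ℤ) ^ S.card := by
  classical
  induction S using Finset.induction_on with
  | empty => simp
  | insert a S ha ih =>
    have hA : a.Prime := h a (Finset.mem_insert_self a S)
    have hS : ∀ p ∈ S, p.Prime := fun p hp => h p (Finset.mem_insert_of_mem hp)
    have hcop : Nat.Coprime a (∏ p ∈ S, p) := by
      refine (Nat.Prime.coprime_iff_not_dvd hA).mpr fun hdvd => ?_
      obtain ⟨p, hp, hap⟩ := (hA.prime.dvd_finset_prod_iff _).mp hdvd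
      exact ha (((Nat.prime_dvd_prime_iff_eq hA (hS p hp)).mp hap) ▸ hp)
    rw [Finset.prod_insert ha, ArithmeticFunction.isMultiplicative_moebius.map_mul_of_coprime hcop,
      ArithmeticFunction.moebius_apply_prime hA, ih hS, Finset.card_insert_of_notMem ha,
      pow_succ]
    ring

lemma prod_subset_primeFactors_dvd (q : ℕ) (S : Finset ℕ) (hS : S ⊆ q.primeFactors) :
    (∏ p ∈ S, p) ∣ q :=
  dvd_trans (Finset.prod_dvd_prod_of_subset _ _ _ hS) (Nat.prod_primeFactors_dvd q)

lemma sum_div_powerset (q : ℕ) (hq : 2 ≤ q) (f : ℕ → ℝ) (hf : ∀ d, ¬ Squarefree d → f d = 0) :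
    ∑ d ∈ q.divisors, f d = ∑ S ∈ q.primeFactors.powerset, f (∏ p ∈ S, p) := by
  classical
  have h0 : q ≠ 0 := by omega
  have h1 : ∑ d ∈ q.divisors.filter Squarefree, f d = ∑ d ∈ q.divisors, f d := by
    refine Finset.sum_filter_of_ne fun d hd hfd => ?_
    by_contra hsq
    exact hfd (hf d hsq)
  rw [← h1, Nat.sum_divisors_filter_squarefree h0]
  have h2 : (UniqueFactorizationMonoid.normalizedFactors q).toFinset = q.primeFactors := by
    rw [Nat.factors_eq]
    rfl
  rw [h2]
  exact Finset.sum_congr rfl fun S hS => by rw [Finset.prod_val]; rfl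

lemma R_eq (q : ℕ) (hq : 2 ≤ q) :
    ∑ d ∈ q.divisors, (ArithmeticFunction.moebius d : ℝ) / d * Real.log ((q / d : ℕ) : ℝ)
      = (Nat.totient q : ℝ) / q
        * (Real.log q + ∑ p ∈ q.primeFactors, Real.log p / ((p : ℝ) - 1)) := by
  classical
  have hq0 : (q : ℝ) ≠ 0 := by positivity
  have hf : ∀ d, ¬ Squarefree d →
      (ArithmeticFunction.moebius d : ℝ) / d * Real.log ((q / d : ℕ) : ℝ) = 0 := by
    intro d hd
    rw [ArithmeticFunction.moebius_eq_zero_of_not_squarefree hd]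
    simp
  rw [sum_div_powerset q hq _ hf]
  have hstep : ∀ S ∈ q.primeFactors.powerset,
      (ArithmeticFunction.moebius (∏ p ∈ S, p) : ℝ) / (∏ p ∈ S, p)
        * Real.log ((q / ∏ p ∈ S, p : ℕ) : ℝ)
      = Real.log q * ((-1 : ℝ) ^ S.card * (∏ p ∈ S, (p : ℝ))⁻¹)
        - (-1 : ℝ) ^ S.card * (∏ p ∈ S, (p : ℝ))⁻¹ * (∑ p ∈ S, Real.log p) := by
    intro S hS
    have hSsub := Finset.mem_powerset.mp hS
    have hPrime : ∀ p ∈ S, p.Prime := fun p hp =>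
      Nat.prime_of_mem_primeFactors (hSsub hp)
    have hp0 : ∀ p ∈ S, (p : ℝ) ≠ 0 := fun p hp => by
      have := (hPrime p hp).pos; positivity
    have hprod0 : (∏ p ∈ S, (p : ℝ)) ≠ 0 := Finset.prod_ne_zero_iff.mpr hp0
    have hdvd : (∏ p ∈ S, p) ∣ q := prod_subset_primeFactors_dvd q S hSsub
    have hcastprod : ((∏ p ∈ S, p : ℕ) : ℝ) = ∏ p ∈ S, (p : ℝ) := by
      rw [Nat.cast_prod]
    have hdiv : ((q / ∏ p ∈ S, p : ℕ) : ℝ) = (q : ℝ) / ∏ p ∈ S, (p : ℝ) := by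
      rw [Nat.cast_div hdvd (by rw [hcastprod]; exact hprod0), hcastprod]
    rw [hdiv, Real.log_div hq0 hprod0, moebius_prod_primes S hPrime, hcastprod,
      Real.log_prod hp0]
    push_cast
    ring
  rw [Finset.sum_congr rfl hstep, Finset.sum_sub_distrib, ← Finset.mul_sum, key_A,
    key_B q.primeFactors (fun p hp => (Nat.prime_of_mem_primeFactors hp).two_le),
    tot_prod q hq]
  ring

noncomputable def ww (q k r : ℕ) : ℝ := ((k * q + r : ℕ) : ℝ)⁻¹ - ((k * q + q : ℕ) : ℝ)⁻¹

lemma ww_nonneg (q k r : ℕ) (h1 : 1 ≤ r) (h2 : r ≤ q) : 0 ≤ ww q k r := by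
  unfold ww
  have h3 : (0 : ℝ) < ((k * q + r : ℕ) : ℝ) := by positivity
  have h4 : ((k * q + r : ℕ) : ℝ) ≤ ((k * q + q : ℕ) : ℝ) := by
    exact_mod_cast Nat.add_le_add_left h2 _
  have := inv_anti₀ h3 h4
  linarith

lemma ww_pos (q k r : ℕ) (h1 : 1 ≤ r) (h2 : r < q) : 0 < ww q k r := by
  unfold ww
  have h3 : (0 : ℝ) < ((k * q + r : ℕ) : ℝ) := by positivity
  have h4 : ((k * q + r : ℕ) : ℝ) < ((k * q + q : ℕ) : ℝ) := by
    exact_mod_cast Nat.add_lt_add_left h2 _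
  have := inv_strictAnti₀ h3 h4
  linarith

lemma sum_ww_divisor (q d m K : ℕ) (hd : 1 ≤ d) (hm : 1 ≤ m) (hdm : d * m = q) :
    ∑ k ∈ Finset.range K, ∑ s ∈ Finset.range m, ww q k (d * (s + 1))
      = (d : ℝ)⁻¹ * (Hs (K * m) - Hs K) := by
  have hd0 : (d : ℝ) ≠ 0 := by positivity
  have hm0 : (m : ℝ) ≠ 0 := by positivity
  have hterm : ∀ k s : ℕ, ww q k (d * (s + 1))
      = (d : ℝ)⁻¹ * (1 / ((k * m + s : ℕ) + 1 : ℝ)) - (d : ℝ)⁻¹ * (m : ℝ)⁻¹ * (1 / ((k : ℕ) + 1 : ℝ)) := by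
    intro k s
    unfold ww
    subst hdm
    push_cast
    have e1 : ((k : ℝ) * (d * m) + d * (s + 1)) = d * ((k * m + s : ℝ) + 1) := by ring
    have e2 : ((k : ℝ) * (d * m) + d * m) = (d * m) * ((k : ℝ) + 1) := by ring
    rw [e1, e2, mul_inv, mul_inv]
    have hk1 : ((k : ℝ) + 1) ≠ 0 := by positivity
    field_simp
  simp_rw [hterm]
  simp_rw [Finset.sum_sub_distrib]
  have h1 : ∑ k ∈ Finset.range K, ∑ s ∈ Finset.range m, (d : ℝ)⁻¹ * (1 / (((k * m + s : ℕ) : ℝ) + 1))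
      = (d : ℝ)⁻¹ * Hs (K * m) := by
    rw [Hs, my_sum_range_mul (fun n => 1 / ((n : ℝ) + 1)) K m, Finset.mul_sum]
    exact Finset.sum_congr rfl fun k _ => by rw [Finset.mul_sum]
  have h2 : ∑ k ∈ Finset.range K, ∑ s ∈ Finset.range m, (d : ℝ)⁻¹ * (m : ℝ)⁻¹ * (1 / ((k : ℝ) + 1))
      = (d : ℝ)⁻¹ * Hs K := by
    rw [Hs, Finset.mul_sum]
    refine Finset.sum_congr rfl fun k _ => ?_
    rw [Finset.sum_const, Finset.card_range, nsmul_eq_mul]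
    field_simp
  rw [h1, h2]
  ring

lemma zmod_sum_range {q : ℕ} [NeZero q] {M : Type*} [AddCommMonoid M] (f : ZMod q → M) :
    ∑ j ∈ Finset.range q, f (j : ZMod q) = ∑ a : ZMod q, f a := by
  refine Finset.sum_nbij' (fun j => (j : ZMod q)) (fun a => a.val) ?_ ?_ ?_ ?_ ?_
  · intro a _; exact Finset.mem_univ _
  · intro a _; exact Finset.mem_range.mpr (ZMod.val_lt a)
  · intro a ha; exact ZMod.val_cast_of_lt (Finset.mem_range.mp ha)
  · intro a _; exact ZMod.natCast_rightInverse a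
  · intro a _; rfl

noncomputable def uu (q r : ℕ) : ℝ := if Nat.Coprime r q then 1 else 0

lemma uu_eq_sum_moebius (q : ℕ) (hq : 2 ≤ q) (r : ℕ) :
    uu q r = ∑ d ∈ q.divisors.filter (· ∣ r), ((ArithmeticFunction.moebius d : ℤ) : ℝ) := by
  classical
  have hq0 : q ≠ 0 := by omega
  have hg0 : Nat.gcd r q ≠ 0 := Nat.gcd_ne_zero_right hq0
  have hset : q.divisors.filter (· ∣ r) = (Nat.gcd r q).divisors := by
    ext d
    simp only [Finset.mem_filter, Nat.mem_divisors, Nat.dvd_gcd_iff]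
    tauto
  rw [hset]
  have h1 : ((ArithmeticFunction.moebius * ArithmeticFunction.zeta :
      ArithmeticFunction ℝ) (Nat.gcd r q)) = (1 : ArithmeticFunction ℝ) (Nat.gcd r q) := by
    rw [ArithmeticFunction.coe_moebius_mul_coe_zeta]
  rw [ArithmeticFunction.coe_mul_zeta_apply] at h1
  rw [ArithmeticFunction.one_apply] at h1
  have h2 : ∑ d ∈ (Nat.gcd r q).divisors, ((ArithmeticFunction.moebius d : ℤ) : ℝ)
      = if Nat.gcd r q = 1 then 1 else 0 := by
    rw [← h1]
    exact Finset.sum_congr rfl fun d _ => by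
      simp [ArithmeticFunction.intCoe_apply]
  rw [h2]
  unfold uu
  congr 1

lemma reindex_dvd (q d k : ℕ) (hdq : d ∣ q) (hd1 : 1 ≤ d) (hq1 : 1 ≤ q) :
    ∑ j ∈ (Finset.range q).filter (fun j => d ∣ (j + 1)), ww q k (j + 1)
      = ∑ s ∈ Finset.range (q / d), ww q k (d * (s + 1)) := by
  have hdm : d * (q / d) = q := Nat.mul_div_cancel' hdq
  refine Finset.sum_nbij' (fun j => (j + 1) / d - 1) (fun s => d * (s + 1) - 1) ?_ ?_ ?_ ?_ ?_
  · intro j hj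
    beta_reduce
    rw [Finset.mem_filter, Finset.mem_range] at hj
    obtain ⟨hjq, c, hc⟩ := hj
    have hc1 : 1 ≤ c := by nlinarith [hd1, hjq]
    rw [hc, Nat.mul_div_cancel_left c hd1, Finset.mem_range]
    have : d * c ≤ q := by omega
    have : c ≤ q / d := by
      refine Nat.le_div_iff_mul_le hd1 |>.mpr ?_
      rw [mul_comm]
      omega
    omega
  · intro s hs
    beta_reduce
    rw [Finset.mem_range] at hs
    have hs1 : s + 1 ≤ q / d := by omega
    have h2 : d * (s + 1) ≤ q := by
      calc d * (s + 1) ≤ d * (q / d) := Nat.mul_le_mul_left d hs1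
        _ = q := hdm
    have h3 : 1 ≤ d * (s + 1) := by nlinarith
    rw [Finset.mem_filter, Finset.mem_range]
    constructor
    · omega
    · have : d * (s + 1) - 1 + 1 = d * (s + 1) := by omega
      rw [this]
      exact Dvd.intro _ rfl
  · intro j hj
    beta_reduce
    rw [Finset.mem_filter] at hj
    obtain ⟨_, c, hc⟩ := hj
    have hc1 : 1 ≤ c := by nlinarith
    rw [hc, Nat.mul_div_cancel_left c hd1]
    have : c - 1 + 1 = c := by omega
    rw [this, ← hc]
    omega
  · intro s _
    beta_reduce
    have h3 : 1 ≤ d * (s + 1) := by nlinarith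
    have h4 : d * (s + 1) - 1 + 1 = d * (s + 1) := by omega
    change (d * (s + 1) - 1 + 1) / d - 1 = s
    rw [h4, Nat.mul_div_cancel_left _ hd1]
    omega
  · intro j hj
    beta_reduce
    rw [Finset.mem_filter] at hj
    obtain ⟨_, c, hc⟩ := hj
    have hc1 : 1 ≤ c := by nlinarith
    change ww q k (j + 1) = ww q k (d * ((j + 1) / d - 1 + 1))
    rw [hc, Nat.mul_div_cancel_left c hd1]
    congr 2
    omega

lemma T_eq (q : ℕ) (hq : 2 ≤ q) (K : ℕ) :
    ∑ k ∈ Finset.range K, ∑ j ∈ Finset.range q, uu q (j + 1) * ww q k (j + 1)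
      = ∑ d ∈ q.divisors, ((ArithmeticFunction.moebius d : ℤ) : ℝ)
          * ((d : ℝ)⁻¹ * (Hs (K * (q / d)) - Hs K)) := by
  classical
  have hq1 : 1 ≤ q := by omega
  have hstep : ∀ k : ℕ, ∑ j ∈ Finset.range q, uu q (j + 1) * ww q k (j + 1)
      = ∑ d ∈ q.divisors, ((ArithmeticFunction.moebius d : ℤ) : ℝ)
          * ∑ s ∈ Finset.range (q / d), ww q k (d * (s + 1)) := by
    intro k
    have h1 : ∀ j ∈ Finset.range q, uu q (j + 1) * ww q k (j + 1)
        = ∑ d ∈ q.divisors, (if d ∣ (j + 1) then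
            ((ArithmeticFunction.moebius d : ℤ) : ℝ) * ww q k (j + 1) else 0) := by
      intro j _
      rw [uu_eq_sum_moebius q hq (j + 1), Finset.sum_mul, ← Finset.sum_filter]
    rw [Finset.sum_congr rfl h1, Finset.sum_comm]
    refine Finset.sum_congr rfl fun d hd => ?_
    obtain ⟨hdq, hq0⟩ := Nat.mem_divisors.mp hd
    have hd1 : 1 ≤ d := Nat.pos_of_dvd_of_pos hdq (by omega)
    rw [← Finset.sum_filter, ← Finset.mul_sum, reindex_dvd q d k hdq hd1 hq1]
  rw [Finset.sum_congr rfl fun k _ => hstep k, Finset.sum_comm]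
  refine Finset.sum_congr rfl fun d hd => ?_
  obtain ⟨hdq, hq0⟩ := Nat.mem_divisors.mp hd
  have hd1 : 1 ≤ d := Nat.pos_of_dvd_of_pos hdq (by omega)
  have hm1 : 1 ≤ q / d := Nat.one_le_div_iff hd1 |>.mpr (Nat.le_of_dvd (by omega) hdq)
  rw [← Finset.mul_sum, sum_ww_divisor q d (q / d) K hd1 hm1 (Nat.mul_div_cancel' hdq)]

lemma tendsto_T (q : ℕ) (hq : 2 ≤ q) :
    Tendsto (fun K : ℕ => ∑ k ∈ Finset.range K, ∑ j ∈ Finset.range q,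
        uu q (j + 1) * ww q k (j + 1)) atTop
      (nhds ((Nat.totient q : ℝ) / q
        * (Real.log q + ∑ p ∈ q.primeFactors, Real.log p / ((p : ℝ) - 1)))) := by
  rw [← R_eq q hq]
  have h : ∀ K : ℕ, ∑ k ∈ Finset.range K, ∑ j ∈ Finset.range q, uu q (j + 1) * ww q k (j + 1)
      = ∑ d ∈ q.divisors, ((ArithmeticFunction.moebius d : ℤ) : ℝ)
          * ((d : ℝ)⁻¹ * (Hs (K * (q / d)) - Hs K)) := fun K => T_eq q hq K
  simp_rw [h]
  refine tendsto_finset_sum _ fun d hd => ?_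
  obtain ⟨hdq, hq0⟩ := Nat.mem_divisors.mp hd
  have hd1 : 1 ≤ d := Nat.pos_of_dvd_of_pos hdq (by omega)
  have hm1 : 1 ≤ q / d := Nat.one_le_div_iff hd1 |>.mpr (Nat.le_of_dvd (by omega) hdq)
  have h2 := ((tendsto_Hs_mul_sub (q / d) hm1).const_mul ((d : ℝ)⁻¹)).const_mul
    ((ArithmeticFunction.moebius d : ℤ) : ℝ)
  have h3 : ((ArithmeticFunction.moebius d : ℤ) : ℝ) / d * Real.log ((q / d : ℕ) : ℝ)
      = ((ArithmeticFunction.moebius d : ℤ) : ℝ) * ((d : ℝ)⁻¹ * Real.log ((q / d : ℕ) : ℝ)) := by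
    ring
  rw [h3]
  exact h2

lemma shift_sum {M : Type*} [AddCommMonoid M] (g : ℕ → M) (q : ℕ) (h0 : g 0 = 0)
    (hq : g q = 0) : ∑ r ∈ Finset.range q, g r = ∑ j ∈ Finset.range q, g (j + 1) := by
  have h1 : ∑ j ∈ Finset.range (q + 1), g j = (∑ j ∈ Finset.range q, g (j + 1)) + g 0 :=
    Finset.sum_range_succ' g q
  have h2 : ∑ j ∈ Finset.range (q + 1), g j = (∑ j ∈ Finset.range q, g j) + g q :=
    Finset.sum_range_succ g q
  rw [h0, add_zero] at h1
  rw [hq, add_zero] at h2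
  rw [← h2, h1]

theorem stmt_7 (q : ℕ) (hq : 2 ≤ q) (χ : DirichletCharacter ℂ q) (hχ : χ ≠ 1) (L : ℂ)
    (hL : Tendsto (fun N : ℕ => ∑ n ∈ Finset.range N, χ (n : ZMod q) / n)
      atTop (nhds L)) :
    ‖L‖ < ((Nat.totient q : ℝ) / q) *
      (Real.log q + ∑ p ∈ q.primeFactors, Real.log p / (p - 1)) := by
  classical
  haveI : NeZero q := ⟨by omega⟩
  haveI : Fact (1 < q) := ⟨by omega⟩
  set B : ℕ → ℂ := fun k => ∑ j ∈ Finset.range q,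
    χ (((j + 1 : ℕ) : ZMod q)) * ((ww q k (j + 1) : ℝ) : ℂ) with hB
  set b : ℕ → ℝ := fun k => ∑ j ∈ Finset.range q, uu q (j + 1) * ww q k (j + 1) with hb
  -- the sum of character values over a period vanishes
  have hsum0 : ∑ j ∈ Finset.range q, χ (((j + 1 : ℕ) : ZMod q)) = 0 := by
    have e1 : ∀ j : ℕ, ((j + 1 : ℕ) : ZMod q) = ((j : ZMod q) + 1) := by
      intro j; push_cast; ring
    simp_rw [e1]
    rw [zmod_sum_range (fun a => χ (a + 1))]
    have e2 : ∑ a : ZMod q, χ (a + 1) = ∑ a : ZMod q, χ a :=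
      Fintype.sum_equiv (Equiv.addRight (1 : ZMod q)) _ _ (fun a => rfl)
    rw [e2]
    exact MulChar.sum_eq_zero_of_ne_one hχ
  -- map_nonunit facts
  have hzero : χ (0 : ZMod q) = 0 := by
    refine MulChar.map_nonunit χ ?_
    intro h
    exact zero_ne_one (isUnit_zero_iff.mp h)
  -- blocks
  have hblock : ∀ K : ℕ, ∑ n ∈ Finset.range (K * q), χ (n : ZMod q) / n
      = ∑ k ∈ Finset.range K, B k := by
    intro K
    rw [my_sum_range_mul (fun n => χ (n : ZMod q) / (n : ℂ)) K q]
    refine Finset.sum_congr rfl fun k _ => ?_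
    have hcast : ∀ r : ℕ, ((k * q + r : ℕ) : ZMod q) = ((r : ℕ) : ZMod q) := by
      intro r; push_cast [ZMod.natCast_self]; ring
    have hstep1 : ∑ r ∈ Finset.range q, χ ((k * q + r : ℕ) : ZMod q) / ((k * q + r : ℕ) : ℂ)
        = ∑ r ∈ Finset.range q, χ ((r : ℕ) : ZMod q) / ((k * q + r : ℕ) : ℂ) := by
      refine Finset.sum_congr rfl fun r _ => by rw [hcast r]
    have hg0 : χ ((0 : ℕ) : ZMod q) / ((k * q + 0 : ℕ) : ℂ) = 0 := by
      norm_num [hzero]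
    have hgq : χ ((q : ℕ) : ZMod q) / ((k * q + q : ℕ) : ℂ) = 0 := by
      rw [ZMod.natCast_self, hzero, zero_div]
    have hstep2 : ∑ r ∈ Finset.range q, χ ((r : ℕ) : ZMod q) / ((k * q + r : ℕ) : ℂ)
        = ∑ j ∈ Finset.range q, χ (((j + 1 : ℕ) : ZMod q)) / ((k * q + (j + 1) : ℕ) : ℂ) :=
      shift_sum (fun r => χ ((r : ℕ) : ZMod q) / ((k * q + r : ℕ) : ℂ)) q hg0 hgq
    have hwcast : ∀ j : ℕ, ((ww q k (j + 1) : ℝ) : ℂ)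
        = ((k * q + (j + 1) : ℕ) : ℂ)⁻¹ - ((k * q + q : ℕ) : ℂ)⁻¹ := by
      intro j
      unfold ww
      push_cast
      ring
    have hstep3 : B k = (∑ j ∈ Finset.range q,
          χ (((j + 1 : ℕ) : ZMod q)) / ((k * q + (j + 1) : ℕ) : ℂ))
        - (∑ j ∈ Finset.range q, χ (((j + 1 : ℕ) : ZMod q))) * ((k * q + q : ℕ) : ℂ)⁻¹ := by
      rw [hB, Finset.sum_mul, ← Finset.sum_sub_distrib]
      refine Finset.sum_congr rfl fun j _ => ?_
      rw [hwcast j, div_eq_mul_inv]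
      ring
    have := hstep1.trans hstep2
    rw [this, hstep3, hsum0, zero_mul, sub_zero]
  -- tendsto of block sums
  have hcomp : Tendsto (fun K : ℕ => K * q) atTop atTop :=
    tendsto_atTop_mono (fun K => Nat.le_mul_of_pos_right K (by omega)) tendsto_id
  have hKq : Tendsto (fun K : ℕ => ∑ k ∈ Finset.range K, B k) atTop (nhds L) := by
    refine (hL.comp hcomp).congr fun K => ?_
    exact hblock K
  -- termwise norm equality
  have hnorm : ∀ k j : ℕ, j < q →
      ‖χ (((j + 1 : ℕ) : ZMod q)) * ((ww q k (j + 1) : ℝ) : ℂ)‖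
        = uu q (j + 1) * ww q k (j + 1) := by
    intro k j hj
    rw [norm_mul, Complex.norm_real,
      Real.norm_of_nonneg (ww_nonneg q k (j + 1) (by omega) (by omega))]
    unfold uu
    by_cases hcop : Nat.Coprime (j + 1) q
    · have hunit : IsUnit (((j + 1 : ℕ)) : ZMod q) := (ZMod.isUnit_iff_coprime _ q).mpr hcop
      rw [if_pos hcop, ← hunit.unit_spec, DirichletCharacter.unit_norm_eq_one χ hunit.unit]
    · have hunit : ¬ IsUnit (((j + 1 : ℕ)) : ZMod q) := fun h =>
        hcop ((ZMod.isUnit_iff_coprime _ q).mp h)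
      rw [if_neg hcop, MulChar.map_nonunit χ hunit]
      simp
  have hBb : ∀ k : ℕ, ‖B k‖ ≤ b k := by
    intro k
    refine (norm_sum_le _ _).trans ?_
    rw [hb]
    refine Finset.sum_le_sum fun j hj => ?_
    rw [hnorm k j (Finset.mem_range.mp hj)]
  -- nontriviality witness
  have hwitness : ∃ a : ZMod q, IsUnit a ∧ χ a ≠ 1 := by
    by_contra h
    push_neg at h
    apply hχ
    refine MulChar.ext fun u => ?_
    rw [h u u.isUnit, MulChar.one_apply_coe]
  obtain ⟨a, haU, hane⟩ := hwitness
  have hχanorm : ‖χ a‖ = 1 := by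
    have := DirichletCharacter.unit_norm_eq_one χ haU.unit
    rwa [haU.unit_spec] at this
  have hχa0 : χ a ≠ 0 := by
    intro h
    rw [h, norm_zero] at hχanorm
    norm_num at hχanorm
  set r0 := a.val with hr0
  have hr0lt : r0 < q := ZMod.val_lt a
  have hr0cast : ((r0 : ℕ) : ZMod q) = a := ZMod.natCast_rightInverse a
  have hr0ne0 : r0 ≠ 0 := by
    intro h
    have ha0 : a = 0 := by rw [← hr0cast, h]; simp
    rw [ha0] at haU
    exact zero_ne_one (isUnit_zero_iff.mp haU)
  have hr0ne1 : r0 ≠ 1 := by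
    intro h
    have ha1 : a = 1 := by rw [← hr0cast, h]; simp
    rw [ha1, map_one] at hane
    exact hane rfl
  set j0 := r0 - 1 with hj0
  have hj0q : j0 ∈ Finset.range q := Finset.mem_range.mpr (by omega)
  have hj00 : j0 ≠ 0 := by omega
  have hj01 : j0 + 1 = r0 := by omega
  set t : ℕ → ℂ := fun j => χ (((j + 1 : ℕ) : ZMod q)) * ((ww q 0 (j + 1) : ℝ) : ℂ) with ht
  have hw1pos : 0 < ww q 0 1 := ww_pos q 0 1 le_rfl (by omega)
  have hw0pos : 0 < ww q 0 (j0 + 1) := ww_pos q 0 (j0 + 1) (by omega) (by omega)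
  have hcast1 : ((0 + 1 : ℕ) : ZMod q) = 1 := by norm_num
  have ht0 : t 0 = ((ww q 0 (0 + 1) : ℝ) : ℂ) := by
    show χ (((0 + 1 : ℕ)) : ZMod q) * _ = _
    rw [hcast1, map_one, one_mul]
  have htj0 : t j0 = χ a * ((ww q 0 (j0 + 1) : ℝ) : ℂ) := by
    show χ (((j0 + 1 : ℕ)) : ZMod q) * _ = _
    rw [hj01, hr0cast]
  have ht0ne : t 0 ≠ 0 := by
    rw [ht0]
    exact Complex.ofReal_ne_zero.mpr hw1pos.ne'
  have htj0ne : t j0 ≠ 0 := by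
    rw [htj0]
    exact mul_ne_zero hχa0 (Complex.ofReal_ne_zero.mpr hw0pos.ne')
  have hray : ¬ SameRay ℝ (t 0) (t j0) := by
    intro hray
    have heq := (sameRay_iff_inv_norm_smul_eq_of_ne ht0ne htj0ne).mp hray
    have e1 : ‖t 0‖⁻¹ • t 0 = 1 := by
      rw [ht0, Complex.norm_real, Real.norm_of_nonneg hw1pos.le, Complex.real_smul,
        ← Complex.ofReal_mul, inv_mul_cancel₀ hw1pos.ne', Complex.ofReal_one]
    have e2 : ‖t j0‖⁻¹ • t j0 = χ a := by
      rw [htj0, norm_mul, Complex.norm_real, Real.norm_of_nonneg hw0pos.le, hχanorm, one_mul,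
        Complex.real_smul, Complex.ofReal_inv]
      have hww : ((ww q 0 (j0 + 1) : ℝ) : ℂ) ≠ 0 := Complex.ofReal_ne_zero.mpr hw0pos.ne'
      field_simp
    rw [e1, e2] at heq
    exact hane heq.symm
  have hstrict : ‖t 0 + t j0‖ < ‖t 0‖ + ‖t j0‖ := norm_add_lt_of_not_sameRay hray
  set δ := (‖t 0‖ + ‖t j0‖) - ‖t 0 + t j0‖ with hδ
  have hδpos : 0 < δ := by rw [hδ]; linarith
  have hsumnorm : ∑ j ∈ Finset.range q, ‖t j‖ = b 0 := by
    rw [hb]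
    exact Finset.sum_congr rfl fun j hj => hnorm 0 j (Finset.mem_range.mp hj)
  have hmem0 : (0 : ℕ) ∈ Finset.range q := Finset.mem_range.mpr (by omega)
  have hmemj0 : j0 ∈ (Finset.range q).erase 0 := Finset.mem_erase.mpr ⟨hj00, hj0q⟩
  have hB0 : ‖B 0‖ ≤ b 0 - δ := by
    have e1 : B 0 = t 0 + (t j0 + ∑ j ∈ ((Finset.range q).erase 0).erase j0, t j) := by
      rw [show B 0 = ∑ j ∈ Finset.range q, t j from rfl]
      rw [← Finset.add_sum_erase _ t hmem0, ← Finset.add_sum_erase _ t hmemj0]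
    have e2 : ∑ j ∈ Finset.range q, ‖t j‖
        = ‖t 0‖ + (‖t j0‖ + ∑ j ∈ ((Finset.range q).erase 0).erase j0, ‖t j‖) := by
      rw [← Finset.add_sum_erase _ (fun j => ‖t j‖) hmem0,
        ← Finset.add_sum_erase _ (fun j => ‖t j‖) hmemj0]
    have h3 : ‖B 0‖ ≤ ‖t 0 + t j0‖ + ∑ j ∈ ((Finset.range q).erase 0).erase j0, ‖t j‖ := by
      rw [e1, ← add_assoc]
      refine (norm_add_le _ _).trans ?_
      exact add_le_add_right (norm_sum_le _ _) _
    rw [← hsumnorm, e2]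
    rw [hδ]
    linarith
  have hpartial : ∀ K : ℕ, 1 ≤ K → ‖∑ k ∈ Finset.range K, B k‖
      ≤ (∑ k ∈ Finset.range K, b k) - δ := by
    intro K hK
    have e1 : ∑ k ∈ Finset.range K, B k = B 0 + ∑ k ∈ Finset.Ico 1 K, B k := by
      rw [Finset.range_eq_Ico, Finset.sum_eq_sum_Ico_succ_bot (by omega : 0 < K)]
    have e2 : ∑ k ∈ Finset.range K, b k = b 0 + ∑ k ∈ Finset.Ico 1 K, b k := by
      rw [Finset.range_eq_Ico, Finset.sum_eq_sum_Ico_succ_bot (by omega : 0 < K)]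
    have h3 : ‖∑ k ∈ Finset.Ico 1 K, B k‖ ≤ ∑ k ∈ Finset.Ico 1 K, b k :=
      (norm_sum_le _ _).trans (Finset.sum_le_sum fun k _ => hBb k)
    rw [e1, e2]
    calc ‖B 0 + ∑ k ∈ Finset.Ico 1 K, B k‖ ≤ ‖B 0‖ + ‖∑ k ∈ Finset.Ico 1 K, B k‖ :=
        norm_add_le _ _
      _ ≤ (b 0 - δ) + ∑ k ∈ Finset.Ico 1 K, b k := add_le_add hB0 h3
      _ = b 0 + ∑ k ∈ Finset.Ico 1 K, b k - δ := by ring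
  have hnormL : Tendsto (fun K : ℕ => ‖∑ k ∈ Finset.range K, B k‖) atTop (nhds ‖L‖) :=
    hKq.norm
  have hT : Tendsto (fun K : ℕ => (∑ k ∈ Finset.range K, b k) - δ) atTop
      (nhds (((Nat.totient q : ℝ) / q
        * (Real.log q + ∑ p ∈ q.primeFactors, Real.log p / ((p : ℝ) - 1))) - δ)) := by
    refine Tendsto.sub_const ?_ δ
    have := tendsto_T q hq
    refine this.congr fun K => ?_
    rw [hb]
  have hle : ‖L‖ ≤ ((Nat.totient q : ℝ) / q
      * (Real.log q + ∑ p ∈ q.primeFactors, Real.log p / ((p : ℝ) - 1))) - δ := by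
    refine le_of_tendsto_of_tendsto hnormL hT ?_
    filter_upwards [eventually_ge_atTop 1] with K hK
    exact hpartial K hK
  calc ‖L‖ ≤ _ - δ := hle
    _ < _ := sub_lt_self _ hδpos
end

section
/- There is an absolute constant C such that for all real t ≥ 2, |Σ_{p ≤ t} (log p)/(p−1) − log t| ≤ C, the sum being over primes p ≤ t (a form of Mertens' second theorem). -/
open Finset Real

namespace Mertens18

open ArithmeticFunction Nat

lemma legendre (n : ℕ) :
    ∑ m ∈ Finset.Ioc 0 n, Real.log m = ∑ d ∈ Finset.Ioc 0 n, Λ d * ((n / d : ℕ) : ℝ) := by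
  have h : ∀ m ∈ Finset.Ioc 0 n, Real.log m
      = ∑ d ∈ Finset.Ioc 0 n, if d ∣ m then Λ d else 0 := by
    intro m hm
    simp only [Finset.mem_Ioc] at hm
    rw [← vonMangoldt_sum, ← Finset.sum_filter]
    refine Finset.sum_congr ?_ fun _ _ => rfl
    ext d
    simp only [Nat.mem_divisors, Finset.mem_filter, Finset.mem_Ioc]
    constructor
    · rintro ⟨hdm, hm0⟩
      exact ⟨⟨Nat.pos_of_dvd_of_pos hdm hm.1, le_trans (Nat.le_of_dvd hm.1 hdm) hm.2⟩, hdm⟩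
    · rintro ⟨_, hdm⟩
      exact ⟨hdm, hm.1.ne'⟩
  rw [Finset.sum_congr rfl h, Finset.sum_comm]
  refine Finset.sum_congr rfl fun d hd => ?_
  rw [← Finset.sum_filter, Finset.sum_const, ← Nat.Ioc_filter_dvd_card_eq_div n d]
  simp [mul_comm]

lemma logfac_eq (n : ℕ) : ∑ m ∈ Finset.Ioc 0 n, Real.log m = Real.log (n !) := by
  rw [← prod_range_add_one_eq_factorial]
  push_cast
  rw [Real.log_prod (fun x _ => by positivity)]
  have hIoc : Finset.Ioc 0 n = Finset.Ico 1 (n+1) := by ext x; simp; omega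
  rw [hIoc, Finset.sum_Ico_eq_sum_range]
  simp [add_comm]

lemma logfac_le (n : ℕ) : ∑ m ∈ Finset.Ioc 0 n, Real.log m ≤ n * Real.log n := by
  calc ∑ m ∈ Finset.Ioc 0 n, Real.log m ≤ ∑ m ∈ Finset.Ioc 0 n, Real.log n := by
        refine Finset.sum_le_sum fun m hm => ?_
        simp only [Finset.mem_Ioc] at hm
        exact Real.log_le_log (by exact_mod_cast hm.1) (by exact_mod_cast hm.2)
    _ = n * Real.log n := by rw [Finset.sum_const, Nat.card_Ioc]; simp

lemma le_logfac (n : ℕ) : n * Real.log n - n ≤ ∑ m ∈ Finset.Ioc 0 n, Real.log m := by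
  rw [logfac_eq]
  have h : ((n : ℝ)) ^ n / (n ! : ℝ) ≤ Real.exp n := by
    calc ((n : ℝ)) ^ n / (n ! : ℝ) ≤ ∑ i ∈ Finset.range (n + 1), (n : ℝ) ^ i / i ! := by
          refine Finset.single_le_sum (f := fun i => (n : ℝ) ^ i / (i ! : ℝ))
            (fun i _ => by positivity) (by simp)
      _ ≤ Real.exp n := Real.sum_le_exp_of_nonneg (by positivity) _
  rcases Nat.eq_zero_or_pos n with h0 | h0
  · simp [h0]
  have h1 : (0:ℝ) < (n:ℝ) ^ n / (n ! : ℝ) := by positivity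
  have := Real.log_le_log h1 h
  rw [Real.log_div (by positivity) (by positivity), Real.log_pow, Real.log_exp] at this
  linarith

lemma theta_le (n : ℕ) :
    ∑ p ∈ (Finset.Iic n).filter Nat.Prime, Real.log p ≤ n * Real.log 4 := by
  have hIic : Finset.Iic n = Finset.range (n + 1) := by ext x; simp [Nat.lt_succ_iff]
  have h1 : ∑ p ∈ (Finset.Iic n).filter Nat.Prime, Real.log p
      = Real.log (primorial n) := by
    rw [primorial, hIic]
    push_cast
    rw [Real.log_prod]
    intro p hp
    simp only [Finset.mem_filter] at hp
    exact_mod_cast hp.2.pos.ne'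
  rw [h1]
  calc Real.log (primorial n) ≤ Real.log ((4:ℕ) ^ n) := by
        apply Real.log_le_log (by exact_mod_cast primorial_pos n)
        exact_mod_cast primorial_le_4_pow n
    _ = n * Real.log 4 := by push_cast; rw [Real.log_pow]

lemma geom_tail {p n : ℕ} (hp : 2 ≤ p) :
    ∑ k ∈ Finset.Icc 1 n, ((1:ℝ)/p) ^ k ≤ 1 / ((p:ℝ) - 1) := by
  have hp1 : (1:ℝ) < p := by exact_mod_cast hp
  have hx0 : (0:ℝ) < 1/p := by positivity
  have hx1 : (1:ℝ)/p < 1 := by rw [div_lt_one (by linarith)]; linarith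
  have h1 : ∑ k ∈ Finset.Icc 1 n, ((1:ℝ)/p) ^ k
      = ∑ k ∈ Finset.range (n+1), ((1:ℝ)/p) ^ k - 1 := by
    have : Finset.range (n+1) = insert 0 (Finset.Icc 1 n) := by
      ext x; simp [Nat.lt_succ_iff]; omega
    rw [this, Finset.sum_insert (by simp)]; simp
  rw [h1, geom_sum_eq (by linarith)]
  have h1x : (0:ℝ) < 1 - 1/p := by linarith
  have e1 : (((1:ℝ)/p)^(n+1) - 1)/(1/p - 1) = (1 - ((1:ℝ)/p)^(n+1))/(1 - 1/p) := by
    rw [← neg_div_neg_eq]; ring_nf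
  rw [e1]
  have h2 : (1 - ((1:ℝ)/p)^(n+1))/(1 - 1/p) ≤ 1/(1 - 1/p) := by
    apply (div_le_div_iff_of_pos_right h1x).mpr
    have := pow_nonneg (le_of_lt hx0) (n+1)
    linarith
  have h3 : 1/(1 - 1/(p:ℝ)) - 1 = 1/((p:ℝ) - 1) := by
    have hpne : (p:ℝ) ≠ 0 := by positivity
    have : (p:ℝ) - 1 ≠ 0 := by intro h; nlinarith
    field_simp
    ring
  linarith

lemma A_le_T (n : ℕ) :
    ∑ d ∈ Finset.Ioc 0 n, Λ d / d
      ≤ ∑ p ∈ (Finset.Iic n).filter Nat.Prime, Real.log p / ((p:ℝ) - 1) := by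
  have hres : ∑ d ∈ Finset.Ioc 0 n, Λ d / d
      = ∑ d ∈ (Finset.Ioc 0 n).filter IsPrimePow, Λ d / d := by
    rw [Finset.sum_filter_of_ne]
    intro d _ hd
    rw [← vonMangoldt_ne_zero_iff]
    intro h; rw [h] at hd; simp at hd
  rw [hres]
  set s := (Finset.Ioc 0 n).filter IsPrimePow with hs
  set t := (Finset.Iic n).filter Nat.Prime with ht
  have hmaps : ∀ d ∈ s, d.minFac ∈ t := by
    intro d hd
    simp only [hs, Finset.mem_filter, Finset.mem_Ioc] at hd
    simp only [ht, Finset.mem_filter, Finset.mem_Iic]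
    have hprime : d.minFac.Prime := Nat.minFac_prime (by have := hd.2.two_le; omega)
    exact ⟨le_trans (Nat.minFac_le hd.1.1) hd.1.2, hprime⟩
  rw [← Finset.sum_fiberwise_of_maps_to hmaps]
  refine Finset.sum_le_sum fun p hp => ?_
  simp only [ht, Finset.mem_filter, Finset.mem_Iic] at hp
  have hp2 : 2 ≤ p := hp.2.two_le
  have hfib : ∀ d ∈ s.filter (fun d => d.minFac = p),
      d = p ^ (Nat.log p d) ∧ 1 ≤ Nat.log p d ∧ Λ d = Real.log p := by
    intro d hd
    simp only [hs, Finset.mem_filter, Finset.mem_Ioc] at hd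
    obtain ⟨⟨⟨hd0, hdn⟩, hpp⟩, hmf⟩ := hd
    obtain ⟨q, k, hq, hk, rfl⟩ := hpp
    rw [Nat.Prime.pow_minFac hq.nat_prime hk.ne'] at hmf
    obtain rfl : p = q := hmf.symm
    have hlog : Nat.log p (p ^ k) = k := Nat.log_pow hq.nat_prime.one_lt _
    refine ⟨by rw [hlog], by rw [hlog]; exact hk, ?_⟩
    rw [vonMangoldt_apply_pow hk.ne', vonMangoldt_apply_prime hq.nat_prime]
  calc ∑ d ∈ s.filter (fun d => d.minFac = p), Λ d / d
      = ∑ d ∈ s.filter (fun d => d.minFac = p), Real.log p * ((1:ℝ)/p) ^ (Nat.log p d) := by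
        refine Finset.sum_congr rfl fun d hd => ?_
        obtain ⟨hdeq, hk1, hΛ⟩ := hfib d hd
        have hcast : (d:ℝ) = (p:ℝ) ^ (Nat.log p d) := by
          rw [hdeq]; push_cast; rw [← hdeq]
        rw [hΛ, hcast, div_pow, one_pow, mul_one_div]
    _ = ∑ k ∈ (s.filter (fun d => d.minFac = p)).image (Nat.log p),
          Real.log p * ((1:ℝ)/p) ^ k := by
        rw [Finset.sum_image]
        intro d1 h1 d2 h2 heq
        rw [(hfib d1 h1).1, (hfib d2 h2).1, heq]
    _ ≤ ∑ k ∈ Finset.Icc 1 n, Real.log p * ((1:ℝ)/p) ^ k := by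
        refine Finset.sum_le_sum_of_subset_of_nonneg ?_ (fun k _ _ => by positivity)
        intro k hk
        simp only [Finset.mem_image] at hk
        obtain ⟨d, hd, rfl⟩ := hk
        obtain ⟨hdeq, hk1, -⟩ := hfib d hd
        simp only [hs, Finset.mem_filter, Finset.mem_Ioc] at hd
        simp only [Finset.mem_Icc]
        exact ⟨hk1, le_trans (Nat.log_le_self _ _) hd.1.1.2⟩
    _ ≤ Real.log p / ((p:ℝ) - 1) := by
        rw [← Finset.mul_sum]
        have hgeo := geom_tail (n := n) hp2
        have hlp : 0 ≤ Real.log p := Real.log_nonneg (by exact_mod_cast hp2.trans' (by norm_num))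
        calc Real.log p * ∑ k ∈ Finset.Icc 1 n, ((1:ℝ)/p) ^ k
            ≤ Real.log p * (1/((p:ℝ)-1)) := mul_le_mul_of_nonneg_left hgeo hlp
          _ = Real.log p / ((p:ℝ)-1) := by ring

lemma pointwise_tail {p : ℕ} (hp : 2 ≤ p) :
    Real.log p / ((p:ℝ) * ((p:ℝ) - 1)) ≤ 4 / ((p:ℝ) ^ ((3:ℝ)/2)) := by
  set x : ℝ := (p:ℝ) with hx
  have hx2 : (2:ℝ) ≤ x := by rw [hx]; exact_mod_cast hp
  have hx0 : (0:ℝ) < x := by linarith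
  have hs : Real.sqrt x * Real.sqrt x = x := Real.mul_self_sqrt (by linarith)
  have hsp : 0 < Real.sqrt x := Real.sqrt_pos.mpr hx0
  have hlog : Real.log x ≤ 2 * Real.sqrt x := by
    have h1 : Real.log (Real.sqrt x) ≤ Real.sqrt x - 1 :=
      Real.log_le_sub_one_of_pos hsp
    have h2 : Real.log (Real.sqrt x) = Real.log x / 2 := Real.log_sqrt (by linarith)
    linarith
  have hrpow : x ^ ((3:ℝ)/2) = x * Real.sqrt x := by
    rw [Real.sqrt_eq_rpow, show (3:ℝ)/2 = 1 + 1/2 by norm_num,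
      Real.rpow_add hx0, Real.rpow_one]
  rw [hrpow, div_le_div_iff₀ (by nlinarith) (by positivity)]
  have h4 : Real.log x * (x * Real.sqrt x) ≤ 2 * Real.sqrt x * (x * Real.sqrt x) :=
    mul_le_mul_of_nonneg_right hlog (by positivity)
  nlinarith [h4, hs, mul_nonneg hx0.le (by linarith : (0:ℝ) ≤ x - 2)]

lemma tail_bound (n : ℕ) :
    ∑ p ∈ (Finset.Iic n).filter Nat.Prime, Real.log p / ((p:ℝ) * ((p:ℝ) - 1))
      ≤ ∑' m : ℕ, 4 / ((m:ℝ) ^ ((3:ℝ)/2)) := by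
  have hsum : Summable (fun m : ℕ => 4 / ((m:ℝ) ^ ((3:ℝ)/2))) := by
    have h := (Real.summable_one_div_nat_rpow (p := 3/2)).mpr (by norm_num)
    simpa [mul_one_div, div_eq_mul_inv] using h.mul_left 4
  calc ∑ p ∈ (Finset.Iic n).filter Nat.Prime, Real.log p / ((p:ℝ) * ((p:ℝ) - 1))
      ≤ ∑ p ∈ (Finset.Iic n).filter Nat.Prime, 4 / ((p:ℝ) ^ ((3:ℝ)/2)) := by
        refine Finset.sum_le_sum fun p hp => ?_
        simp only [Finset.mem_filter] at hp
        exact pointwise_tail hp.2.two_le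
    _ ≤ ∑' m : ℕ, 4 / ((m:ℝ) ^ ((3:ℝ)/2)) :=
        Summable.sum_le_tsum _ (fun m _ => by positivity) hsum

lemma main_bounds {n : ℕ} (hn : 2 ≤ n) :
    Real.log n - 1 ≤ (∑ p ∈ (Finset.Iic n).filter Nat.Prime, Real.log p / ((p:ℝ) - 1)) ∧
    (∑ p ∈ (Finset.Iic n).filter Nat.Prime, Real.log p / ((p:ℝ) - 1))
      ≤ Real.log n + Real.log 4 + (∑' m : ℕ, 4 / ((m:ℝ) ^ ((3:ℝ)/2))) := by
  set T := ∑ p ∈ (Finset.Iic n).filter Nat.Prime, Real.log p / ((p:ℝ) - 1) with hT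
  have hn0 : (0:ℝ) < n := by positivity
  have hL := legendre n
  -- lower bound
  have hlow : Real.log n - 1 ≤ T := by
    have h2 : ∑ d ∈ Finset.Ioc 0 n, Λ d * ((n / d : ℕ) : ℝ)
        ≤ (n:ℝ) * ∑ d ∈ Finset.Ioc 0 n, Λ d / d := by
      rw [Finset.mul_sum]
      refine Finset.sum_le_sum fun d hd => ?_
      simp only [Finset.mem_Ioc] at hd
      have hd0 : (0:ℝ) < d := by exact_mod_cast hd.1
      calc Λ d * ((n / d : ℕ) : ℝ) ≤ Λ d * ((n:ℝ) / d) :=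
            mul_le_mul_of_nonneg_left (Nat.cast_div_le) vonMangoldt_nonneg
        _ = (n:ℝ) * (Λ d / d) := by ring
    have h3 := A_le_T n
    have h4 := le_logfac n
    have h5 : (n:ℝ) * Real.log n - n ≤ (n:ℝ) * T := by
      calc (n:ℝ) * Real.log n - n ≤ ∑ m ∈ Finset.Ioc 0 n, Real.log m := h4
        _ = ∑ d ∈ Finset.Ioc 0 n, Λ d * ((n / d : ℕ) : ℝ) := hL
        _ ≤ (n:ℝ) * ∑ d ∈ Finset.Ioc 0 n, Λ d / d := h2
        _ ≤ (n:ℝ) * T := mul_le_mul_of_nonneg_left h3 hn0.le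
    have := (mul_le_mul_iff_right₀ hn0).mp (by linarith : (n:ℝ) * (Real.log n - 1) ≤ (n:ℝ) * T)
    linarith
  refine ⟨hlow, ?_⟩
  -- upper bound
  set P := ∑ p ∈ (Finset.Iic n).filter Nat.Prime, Real.log p / (p:ℝ) with hP
  have hsplit : T = P + ∑ p ∈ (Finset.Iic n).filter Nat.Prime,
      Real.log p / ((p:ℝ) * ((p:ℝ) - 1)) := by
    rw [hT, hP, ← Finset.sum_add_distrib]
    refine Finset.sum_congr rfl fun p hp => ?_
    simp only [Finset.mem_filter] at hp
    have hp2 : (2:ℝ) ≤ p := by exact_mod_cast hp.2.two_le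
    have h1 : (p:ℝ) ≠ 0 := by linarith
    have h2 : (p:ℝ) - 1 ≠ 0 := by intro h; nlinarith
    field_simp
    ring
  have hPle : P ≤ Real.log n + Real.log 4 := by
    have key : (n:ℝ) * P - (∑ p ∈ (Finset.Iic n).filter Nat.Prime, Real.log p)
        ≤ ∑ m ∈ Finset.Ioc 0 n, Real.log m := by
      have e1 : (n:ℝ) * P - (∑ p ∈ (Finset.Iic n).filter Nat.Prime, Real.log p)
          = ∑ p ∈ (Finset.Iic n).filter Nat.Prime,
              (Real.log p * ((n:ℝ)/p) - Real.log p) := by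
        rw [hP, Finset.mul_sum, ← Finset.sum_sub_distrib]
        refine Finset.sum_congr rfl fun p hp => ?_
        ring
      rw [e1, hL]
      calc ∑ p ∈ (Finset.Iic n).filter Nat.Prime, (Real.log p * ((n:ℝ)/p) - Real.log p)
          ≤ ∑ p ∈ (Finset.Iic n).filter Nat.Prime, Λ p * ((n / p : ℕ) : ℝ) := by
            refine Finset.sum_le_sum fun p hp => ?_
            simp only [Finset.mem_filter, Finset.mem_Iic] at hp
            have hpp := hp.2
            have hp0 : 0 < p := hpp.pos
            have hlp : 0 ≤ Real.log p := Real.log_nonneg (by exact_mod_cast hpp.one_lt.le)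
            have hfloor : (n:ℝ)/p - 1 ≤ ((n / p : ℕ) : ℝ) := by
              have e : (n:ℝ) = (p:ℝ) * ((n/p : ℕ):ℝ) + ((n % p : ℕ):ℝ) := by
                exact_mod_cast (Nat.div_add_mod n p).symm
              have hm : ((n % p : ℕ):ℝ) < (p:ℝ) := by exact_mod_cast Nat.mod_lt n hp0
              have hpr : (0:ℝ) < p := by exact_mod_cast hp0
              have h6 : (n:ℝ)/p ≤ ((n/p:ℕ):ℝ) + 1 := by
                rw [div_le_iff₀ hpr]; nlinarith
              linarith
            rw [vonMangoldt_apply_prime hpp]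
            calc Real.log p * ((n:ℝ)/p) - Real.log p = Real.log p * ((n:ℝ)/p - 1) := by ring
              _ ≤ Real.log p * ((n / p : ℕ) : ℝ) := mul_le_mul_of_nonneg_left hfloor hlp
        _ ≤ ∑ d ∈ Finset.Ioc 0 n, Λ d * ((n / d : ℕ) : ℝ) := by
            refine Finset.sum_le_sum_of_subset_of_nonneg ?_ (fun d _ _ =>
              mul_nonneg vonMangoldt_nonneg (by positivity))
            intro p hp
            simp only [Finset.mem_filter, Finset.mem_Iic] at hp
            simp only [Finset.mem_Ioc]
            exact ⟨hp.2.pos, hp.1⟩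
    have hθ := theta_le n
    have hlf := logfac_le n
    have : (n:ℝ) * P ≤ (n:ℝ) * (Real.log n + Real.log 4) := by linarith
    exact (mul_le_mul_iff_right₀ hn0).mp this
  have htail := tail_bound n
  linarith [hsplit, hPle, htail]

end Mertens18

/-- a form of Mertens' second theorem. -/
theorem stmt_18 : ∃ C : ℝ, ∀ t : ℝ, 2 ≤ t →
    |(∑ p ∈ (Finset.Iic ⌊t⌋₊).filter Nat.Prime, Real.log p / (p - 1)) - Real.log t|
      ≤ C := by
  refine ⟨Real.log 4 + (∑' m : ℕ, 4 / ((m:ℝ) ^ ((3:ℝ)/2))) + Real.log 2 + 1, ?_⟩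
  intro t ht
  set n := ⌊t⌋₊ with hn
  have hn2 : 2 ≤ n := Nat.le_floor (by exact_mod_cast ht)
  have hnt : (n:ℝ) ≤ t := Nat.floor_le (by linarith)
  have htn : t < (n:ℝ) + 1 := Nat.lt_floor_add_one t
  have hn0 : (0:ℝ) < n := by positivity
  have hlog1 : Real.log n ≤ Real.log t := Real.log_le_log hn0 hnt
  have hlog2 : Real.log t ≤ Real.log n + Real.log 2 := by
    rw [← Real.log_mul (by positivity) (by norm_num)]
    apply Real.log_le_log (by linarith)
    have : (1:ℝ) ≤ n := by exact_mod_cast le_trans one_le_two hn2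
    linarith
  obtain ⟨hlo, hhi⟩ := Mertens18.main_bounds hn2
  have hC0 : 0 ≤ ∑' m : ℕ, 4 / ((m:ℝ) ^ ((3:ℝ)/2)) := tsum_nonneg (fun m => by positivity)
  have hl2 : (0:ℝ) ≤ Real.log 2 := Real.log_nonneg (by norm_num)
  have hl4 : (0:ℝ) ≤ Real.log 4 := Real.log_nonneg (by norm_num)
  rw [abs_sub_le_iff]
  constructor <;> linarith
end
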